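/- arXiv:2311.04523 — 11 statements merged into one kernel-verified Lean document; each statement's English description precedes it below -/
import Mathlib

section
/- Let f : H → ℝ be bounded and H_R-Lipschitz with constant L, i.e. |f(x + Rv) − f(x)| ≤ L‖v‖_H for all x ∈ H, v ∈ H. Then for every ε > 0 and every x ∈ H one has 0 ≤ f(x) − f_ε(x) ≤ 4εL², where f_ε is the Lasry–Lions approximation of f. -/
open Real
open scoped RealInnerProductSpace

/-- The Lasry–Lions approximation of `f` along the range of `R`:
`f_ε(x) := sup_v ( inf_u ( f(x + Ru − Rv) + ‖u‖²/(2ε) ) − ‖v‖²/ε )`. -/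
noncomputable def lasryLions {H : Type*} [NormedAddCommGroup H] [InnerProductSpace ℝ H]
    (R : H →L[ℝ] H) (f : H → ℝ) (ε : ℝ) (x : H) : ℝ :=
  ⨆ v : H, ((⨅ u : H, (f (x + R u - R v) + ‖u‖ ^ 2 / (2 * ε))) - ‖v‖ ^ 2 / ε)

/-- For bounded `H_R`-Lipschitz `f` with constant `L`, the Lasry–Lions approximation
satisfies `0 ≤ f(x) − f_ε(x) ≤ 4εL²`. -/
theorem stmt2
    {H : Type*} [NormedAddCommGroup H] [InnerProductSpace ℝ H] [CompleteSpace H]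
    [SecondCountableTopology H]
    (R : H →L[ℝ] H) (hR_sa : IsSelfAdjoint R)
    (hR_pos : ∀ x : H, 0 ≤ ⟪R x, x⟫)
    (hR_inj : Function.Injective R)
    (f : H → ℝ) (hf_bdd : ∃ M, ∀ x, |f x| ≤ M)
    (L : ℝ) (hL : 0 ≤ L)
    (hf_lip : ∀ (x v : H), |f (x + R v) - f x| ≤ L * ‖v‖) :
    ∀ ε > (0 : ℝ), ∀ x : H,
      0 ≤ f x - lasryLions R f ε x ∧ f x - lasryLions R f ε x ≤ 4 * ε * L ^ 2 := by

  intro ε hε x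
  obtain ⟨M, hM⟩ := hf_bdd
  -- the inner infimum is bounded below
  have hbb : ∀ v : H, BddBelow (Set.range fun u : H => f (x + R u - R v) + ‖u‖ ^ 2 / (2 * ε)) := by
    intro v
    refine ⟨-M, ?_⟩
    rintro _ ⟨u, rfl⟩
    have h1 := (abs_le.1 (hM (x + R u - R v))).1
    have h2 : 0 ≤ ‖u‖ ^ 2 / (2 * ε) := div_nonneg (sq_nonneg _) (by linarith)
    linarith
  -- each term of the sup is ≤ f x
  have hterm : ∀ v : H,
      ((⨅ u : H, (f (x + R u - R v) + ‖u‖ ^ 2 / (2 * ε))) - ‖v‖ ^ 2 / ε) ≤ f x := by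
    intro v
    have h1 : (⨅ u : H, (f (x + R u - R v) + ‖u‖ ^ 2 / (2 * ε)))
        ≤ f (x + R v - R v) + ‖v‖ ^ 2 / (2 * ε) := ciInf_le (hbb v) v
    have h2 : x + R v - R v = x := by abel
    rw [h2] at h1
    have h3 : ‖v‖ ^ 2 / (2 * ε) ≤ ‖v‖ ^ 2 / ε := by
      apply div_le_div_of_nonneg_left (sq_nonneg _) hε; linarith
    linarith
  have hsup_le : lasryLions R f ε x ≤ f x := ciSup_le hterm
  constructor
  · linarith
  · -- lower bound on the sup : take v = 0
    have hbddAbove : BddAbove (Set.range fun v : H =>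
        ((⨅ u : H, (f (x + R u - R v) + ‖u‖ ^ 2 / (2 * ε))) - ‖v‖ ^ 2 / ε)) := by
      refine ⟨f x, ?_⟩
      rintro _ ⟨v, rfl⟩
      exact hterm v
    have hle : ((⨅ u : H, (f (x + R u - R (0:H)) + ‖u‖ ^ 2 / (2 * ε))) - ‖(0:H)‖ ^ 2 / ε)
        ≤ lasryLions R f ε x := le_ciSup hbddAbove (0 : H)
    have hinf : f x - ε * L ^ 2 / 2 ≤ (⨅ u : H, (f (x + R u - R (0:H)) + ‖u‖ ^ 2 / (2 * ε))) := by
      apply le_ciInf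
      intro u
      have hz : x + R u - R (0:H) = x + R u := by rw [map_zero]; abel
      rw [hz]
      have hlip := (abs_le.1 (hf_lip x u)).1
      have hsq : (0:ℝ) ≤ (‖u‖ - ε * L) ^ 2 / (2 * ε) :=
        div_nonneg (sq_nonneg _) (by linarith)
      have hexp : (‖u‖ - ε * L) ^ 2 / (2 * ε)
          = ‖u‖ ^ 2 / (2 * ε) - L * ‖u‖ + ε * L ^ 2 / 2 := by
        field_simp
        ring
      linarith [hexp ▸ hsq]
    have hz2 : ‖(0:H)‖ ^ 2 / ε = 0 := by simp
    rw [hz2, sub_zero] at hle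
    have : f x - ε * L ^ 2 / 2 ≤ lasryLions R f ε x := le_trans hinf hle
    nlinarith [sq_nonneg L]
end

section
/- Let f : H → ℝ be bounded and H_R-Lipschitz with constant L, i.e. |f(x + Rv) − f(x)| ≤ L‖v‖_H for all x ∈ H, v ∈ H. Then for every ε > 0, every x ∈ H and every v ∈ H, the Lasry–Lions approximation f_ε satisfies |f_ε(x + Rv) − f_ε(x)| ≤ (1/ε)‖v‖_H² + 4√2 L ‖v‖_H. -/
open Real
open scoped RealInnerProductSpace

lemma ll_key {H : Type*} [NormedAddCommGroup H] [InnerProductSpace ℝ H]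
    (R : H →L[ℝ] H) (f : H → ℝ) (M : ℝ) (hM : ∀ x, |f x| ≤ M)
    (L : ℝ) (hf_lip : ∀ x v, |f (x + R v) - f x| ≤ L * ‖v‖)
    (ε : ℝ) (hε : 0 < ε) (x v : H) :
    lasryLions R f ε (x + R v) ≤ lasryLions R f ε x + L * ‖v‖ := by
  have hM0 : ∀ y, -M ≤ f y ∧ f y ≤ M := fun y => abs_le.1 (hM y)
  have hbb : ∀ (y w : H),
      BddBelow (Set.range fun u => f (y + R u - R w) + ‖u‖ ^ 2 / (2 * ε)) := by
    intro y w
    refine ⟨-M, ?_⟩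
    rintro _ ⟨u, rfl⟩
    have h1 := (hM0 (y + R u - R w)).1
    have h2 : 0 ≤ ‖u‖ ^ 2 / (2 * ε) := by positivity
    simp only
    linarith
  have hba : ∀ y : H, BddAbove (Set.range fun w =>
      (⨅ u, f (y + R u - R w) + ‖u‖ ^ 2 / (2 * ε)) - ‖w‖ ^ 2 / ε) := by
    intro y
    refine ⟨M, ?_⟩
    rintro _ ⟨w, rfl⟩
    have h1 : (⨅ u, f (y + R u - R w) + ‖u‖ ^ 2 / (2 * ε))
        ≤ f (y + R 0 - R w) + ‖(0:H)‖ ^ 2 / (2 * ε) := ciInf_le (hbb y w) 0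
    have h2 := (hM0 (y + R 0 - R w)).2
    have h3 : 0 ≤ ‖w‖ ^ 2 / ε := by positivity
    norm_num at h1 h2
    simp only
    linarith
  unfold lasryLions
  apply ciSup_le
  intro w
  have hinner : (⨅ u, f (x + R v + R u - R w) + ‖u‖ ^ 2 / (2 * ε))
      ≤ (⨅ u, f (x + R u - R w) + ‖u‖ ^ 2 / (2 * ε)) + L * ‖v‖ := by
    rw [← sub_le_iff_le_add]
    apply le_ciInf
    intro u
    have h := ciInf_le (hbb (x + R v) w) u
    have hl := (abs_le.1 (hf_lip (x + R u - R w) v)).2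
    have heq : x + R u - R w + R v = x + R v + R u - R w := by abel
    rw [heq] at hl
    linarith
  have hle := le_ciSup (hba x) w
  linarith

/-- For bounded `H_R`-Lipschitz `f` with constant `L`, the Lasry–Lions approximation
satisfies `|f_ε(x + Rv) − f_ε(x)| ≤ (1/ε)‖v‖² + 4√2 L ‖v‖`. -/
theorem stmt3
    {H : Type*} [NormedAddCommGroup H] [InnerProductSpace ℝ H] [CompleteSpace H]
    [SecondCountableTopology H]
    (R : H →L[ℝ] H) (hR_sa : IsSelfAdjoint R)
    (hR_pos : ∀ x : H, 0 ≤ ⟪R x, x⟫)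
    (hR_inj : Function.Injective R)
    (f : H → ℝ) (hf_bdd : ∃ M, ∀ x, |f x| ≤ M)
    (L : ℝ) (hL : 0 ≤ L)
    (hf_lip : ∀ (x v : H), |f (x + R v) - f x| ≤ L * ‖v‖) :
    ∀ ε > (0 : ℝ), ∀ (x v : H),
      |lasryLions R f ε (x + R v) - lasryLions R f ε x|
        ≤ (1 / ε) * ‖v‖ ^ 2 + 4 * Real.sqrt 2 * L * ‖v‖ := by
  obtain ⟨M, hM⟩ := hf_bdd
  intro ε hε x v
  have h1 := ll_key R f M hM L hf_lip ε hε x v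
  have h2 := ll_key R f M hM L hf_lip ε hε (x + R v) (-v)
  rw [map_neg, norm_neg] at h2
  have heq : x + R v + -(R v) = x := by abel
  rw [heq] at h2
  have hs : (1 : ℝ) ≤ Real.sqrt 2 := by
    rw [show (1:ℝ) = Real.sqrt 1 from (Real.sqrt_one).symm]
    exact Real.sqrt_le_sqrt (by norm_num)
  have hv : 0 ≤ ‖v‖ := norm_nonneg v
  have hq : 0 ≤ (1 / ε) * ‖v‖ ^ 2 := by positivity
  rw [abs_sub_le_iff]
  constructor <;> nlinarith
end

section
/- Let f : H → ℝ be bounded and H_R-Lipschitz with constant L, i.e. |f(x + Rv) − f(x)| ≤ L‖v‖_H for all x ∈ H, v ∈ H. Then for every ε > 0 the Lasry–Lions approximation f_ε is H_R-Lipschitz with constant 4√2 L, i.e. |f_ε(x + Rv) − f_ε(x)| ≤ 4√2 L ‖v‖_H for all x ∈ H and v ∈ H. -/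
open Real
open scoped RealInnerProductSpace

/-- For bounded `H_R`-Lipschitz `f` with constant `L`, the Lasry–Lions approximation
is `H_R`-Lipschitz with constant `4√2 L`. -/
theorem stmt4
    {H : Type*} [NormedAddCommGroup H] [InnerProductSpace ℝ H] [CompleteSpace H]
    [SecondCountableTopology H]
    (R : H →L[ℝ] H) (hR_sa : IsSelfAdjoint R)
    (hR_pos : ∀ x : H, 0 ≤ ⟪R x, x⟫)
    (hR_inj : Function.Injective R)
    (f : H → ℝ) (hf_bdd : ∃ M, ∀ x, |f x| ≤ M)
    (L : ℝ) (hL : 0 ≤ L)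
    (hf_lip : ∀ (x v : H), |f (x + R v) - f x| ≤ L * ‖v‖) :
    ∀ ε > (0 : ℝ), ∀ (x v : H),
      |lasryLions R f ε (x + R v) - lasryLions R f ε x|
        ≤ 4 * Real.sqrt 2 * L * ‖v‖ := by
  intro ε hε
  obtain ⟨M, hM⟩ := hf_bdd
  have h2ε : (0 : ℝ) < 2 * ε := by linarith
  -- the inner infimum family is bounded below
  have hbb : ∀ (y v : H),
      BddBelow (Set.range fun u : H => f (y + R u - R v) + ‖u‖ ^ 2 / (2 * ε)) := by
    intro y v
    refine ⟨-M, ?_⟩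
    rintro _ ⟨u, rfl⟩
    have h1 : -M ≤ f (y + R u - R v) := neg_le_of_abs_le (hM _)
    have h2 : 0 ≤ ‖u‖ ^ 2 / (2 * ε) := div_nonneg (sq_nonneg _) h2ε.le
    linarith
  -- the inner infimum is at most M
  have hinf_le_M : ∀ (y v : H),
      (⨅ u : H, (f (y + R u - R v) + ‖u‖ ^ 2 / (2 * ε))) ≤ M := by
    intro y v
    refine le_trans (ciInf_le (hbb y v) 0) ?_
    have h1 : f (y + R 0 - R v) ≤ M := le_of_abs_le (hM _)
    have h2 : ‖(0 : H)‖ ^ 2 / (2 * ε) = 0 := by simp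
    linarith
  -- the supremum family is bounded above
  have hba : ∀ (y : H),
      BddAbove (Set.range fun v : H =>
        ((⨅ u : H, (f (y + R u - R v) + ‖u‖ ^ 2 / (2 * ε))) - ‖v‖ ^ 2 / ε)) := by
    intro y
    refine ⟨M, ?_⟩
    rintro _ ⟨v, rfl⟩
    have h1 := hinf_le_M y v
    have h2 : 0 ≤ ‖v‖ ^ 2 / ε := div_nonneg (sq_nonneg _) hε.le
    linarith
  -- key one-sided Lipschitz estimate
  have key : ∀ (x w : H),
      lasryLions R f ε (x + R w) ≤ lasryLions R f ε x + L * ‖w‖ := by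
    intro x w
    unfold lasryLions
    refine ciSup_le fun v => ?_
    have hle : (⨅ u : H, (f (x + R w + R u - R v) + ‖u‖ ^ 2 / (2 * ε))) ≤
        (⨅ u : H, (f (x + R u - R v) + ‖u‖ ^ 2 / (2 * ε))) + L * ‖w‖ := by
      rw [← sub_le_iff_le_add]
      refine le_ciInf fun u => ?_
      rw [sub_le_iff_le_add]
      have h1 : (⨅ u : H, (f (x + R w + R u - R v) + ‖u‖ ^ 2 / (2 * ε))) ≤
          f (x + R w + R u - R v) + ‖u‖ ^ 2 / (2 * ε) := ciInf_le (hbb (x + R w) v) u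
      have h2 : f (x + R w + R u - R v) ≤ f (x + R u - R v) + L * ‖w‖ := by
        have h := hf_lip (x + R u - R v) w
        have heq : x + R u - R v + R w = x + R w + R u - R v := by abel
        rw [heq] at h
        have := (abs_le.mp h).2
        linarith
      linarith
    have h3 : (⨅ u : H, (f (x + R u - R v) + ‖u‖ ^ 2 / (2 * ε))) - ‖v‖ ^ 2 / ε ≤
        ⨆ v' : H, ((⨅ u : H, (f (x + R u - R v') + ‖u‖ ^ 2 / (2 * ε))) - ‖v'‖ ^ 2 / ε) :=
      le_ciSup (hba x) v
    linarith
  intro x v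
  have c1 := key x v
  have c2 := key (x + R v) (-v)
  have hxx : x + R v + R (-v) = x := by
    rw [map_neg]; abel
  rw [hxx, norm_neg] at c2
  have hconst : L * ‖v‖ ≤ 4 * Real.sqrt 2 * L * ‖v‖ := by
    have h2 : (1 : ℝ) ≤ Real.sqrt 2 := by
      rw [show (1 : ℝ) = Real.sqrt 1 from Real.sqrt_one.symm]
      exact Real.sqrt_le_sqrt (by norm_num)
    nlinarith [norm_nonneg v]
  rw [abs_sub_le_iff]
  constructor <;> linarith
end

section
/- (Herbst-type lemma.) Let ν be a probability measure on a measurable space, let g be a bounded measurable real-valued function and let K > 0. Assume that for every τ > 0, τ ∫ g e^{τg} dν − (∫ e^{τg} dν) · ln(∫ e^{τg} dν) ≤ K τ² ∫ e^{τg} dν. Then for every t > 0, ∫ e^{t g} dν ≤ exp( K t² + t ∫ g dν ). -/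
open Real MeasureTheory

/-- Herbst-type lemma: if for every `τ > 0`,
`τ ∫ g e^{τg} dν − (∫ e^{τg} dν) ln(∫ e^{τg} dν) ≤ K τ² ∫ e^{τg} dν`,
then `∫ e^{tg} dν ≤ exp(K t² + t ∫ g dν)` for every `t > 0`. -/
theorem stmt5
    {Ω : Type*} [MeasurableSpace Ω] (ν : Measure Ω) [IsProbabilityMeasure ν]
    (g : Ω → ℝ) (hg_meas : Measurable g) (hg_bdd : ∃ M, ∀ ω, |g ω| ≤ M)
    (K : ℝ) (hK : 0 < K)
    (h : ∀ τ > (0 : ℝ),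
      τ * ∫ ω, g ω * Real.exp (τ * g ω) ∂ν
        - (∫ ω, Real.exp (τ * g ω) ∂ν) * Real.log (∫ ω, Real.exp (τ * g ω) ∂ν)
        ≤ K * τ ^ 2 * ∫ ω, Real.exp (τ * g ω) ∂ν) :
    ∀ t > (0 : ℝ),
      ∫ ω, Real.exp (t * g ω) ∂ν ≤ Real.exp (K * t ^ 2 + t * ∫ ω, g ω ∂ν) := by
  obtain ⟨M₀, hM₀⟩ := hg_bdd
  set M : ℝ := max M₀ 0 with hMdef
  have hM : ∀ ω, |g ω| ≤ M := fun ω => le_max_of_le_left (hM₀ ω)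
  have hM0 : 0 ≤ M := le_max_right _ _
  set Λ : ℝ → ℝ := fun τ => ∫ ω, Real.exp (τ * g ω) ∂ν with hΛdef
  set I : ℝ → ℝ := fun τ => ∫ ω, g ω * Real.exp (τ * g ω) ∂ν with hIdef
  -- integrability
  have hint : ∀ τ : ℝ, Integrable (fun ω => Real.exp (τ * g ω)) ν := by
    intro τ
    refine ⟨((hg_meas.const_mul τ).exp).aestronglyMeasurable, ?_⟩
    apply HasFiniteIntegral.of_bounded (C := Real.exp (|τ| * M))
    filter_upwards with ω
    rw [Real.norm_eq_abs, Real.abs_exp]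
    refine Real.exp_le_exp.2 ?_
    calc τ * g ω ≤ |τ * g ω| := le_abs_self _
      _ = |τ| * |g ω| := abs_mul _ _
      _ ≤ |τ| * M := by gcongr; exact hM ω
  have hint' : ∀ τ : ℝ, Integrable (fun ω => g ω * Real.exp (τ * g ω)) ν := by
    intro τ
    refine ⟨(hg_meas.mul (hg_meas.const_mul τ).exp).aestronglyMeasurable, ?_⟩
    apply HasFiniteIntegral.of_bounded (C := M * Real.exp (|τ| * M))
    filter_upwards with ω
    rw [Real.norm_eq_abs, abs_mul, Real.abs_exp]
    have h1 : τ * g ω ≤ |τ| * M := by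
      calc τ * g ω ≤ |τ * g ω| := le_abs_self _
        _ = |τ| * |g ω| := abs_mul _ _
        _ ≤ |τ| * M := by gcongr; exact hM ω
    exact mul_le_mul (hM ω) (Real.exp_le_exp.2 h1) (Real.exp_pos _).le hM0
  have hΛpos : ∀ τ : ℝ, 0 < Λ τ := fun τ => integral_exp_pos (hint τ)
  -- derivative of Λ
  have hderiv : ∀ τ : ℝ, HasDerivAt Λ (I τ) τ := by
    intro τ
    have key := hasDerivAt_integral_of_dominated_loc_of_deriv_le (μ := ν)
      (F := fun x ω => Real.exp (x * g ω)) (F' := fun x ω => g ω * Real.exp (x * g ω))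
      (x₀ := τ) (bound := fun _ => M * Real.exp ((|τ| + 1) * M)) (Metric.ball_mem_nhds τ one_pos)
      (Filter.Eventually.of_forall fun x =>
        ((hg_meas.const_mul x).exp).aestronglyMeasurable)
      (hint τ)
      ((hg_meas.mul (hg_meas.const_mul τ).exp).aestronglyMeasurable)
      ?_ (integrable_const _) ?_
    · exact key.2
    · filter_upwards with ω x hx
      rw [Real.norm_eq_abs, abs_mul, Real.abs_exp]
      have hxb : |x| ≤ |τ| + 1 := by
        have := mem_ball_iff_norm.mp hx
        calc |x| = |τ + (x - τ)| := by ring_nf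
          _ ≤ |τ| + |x - τ| := abs_add_le _ _
          _ ≤ |τ| + 1 := by
              have : |x - τ| ≤ 1 := by
                rw [Real.norm_eq_abs] at this; linarith
              linarith
      have h1 : x * g ω ≤ (|τ| + 1) * M := by
        calc x * g ω ≤ |x * g ω| := le_abs_self _
          _ = |x| * |g ω| := abs_mul _ _
          _ ≤ (|τ| + 1) * M := by
              exact mul_le_mul hxb (hM ω) (abs_nonneg _) (by positivity)
      exact mul_le_mul (hM ω) (Real.exp_le_exp.2 h1) (Real.exp_pos _).le hM0
    · filter_upwards with ω x _
      simpa [mul_comm] using (hasDerivAt_mul_const (g ω) (x := x)).exp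
  -- u = log Λ
  set u : ℝ → ℝ := fun τ => Real.log (Λ τ) with hudef
  have hu : ∀ τ : ℝ, HasDerivAt u (I τ / Λ τ) τ := fun τ =>
    (hderiv τ).log (hΛpos τ).ne'
  -- ψ
  set ψ : ℝ → ℝ := fun τ => u τ / τ - K * τ with hψdef
  have hψ : ∀ τ : ℝ, τ ≠ 0 →
      HasDerivAt ψ ((I τ / Λ τ * τ - u τ) / τ ^ 2 - K) τ := by
    intro τ hτ
    have h1 := ((hu τ).div (hasDerivAt_id τ) hτ).sub ((hasDerivAt_id τ).const_mul K)
    simp at h1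
    exact h1
  have hψ_nonpos : ∀ τ : ℝ, 0 < τ → (I τ / Λ τ * τ - u τ) / τ ^ 2 - K ≤ 0 := by
    intro τ hτ
    have hΛ := hΛpos τ
    have hhyp := h τ hτ
    rw [sub_nonpos, div_le_iff₀ (by positivity)]
    rw [sub_le_iff_le_add, div_mul_eq_mul_div, div_le_iff₀ hΛ]
    simp only [hudef]
    nlinarith [hhyp]
  -- antitone on [a, t]
  intro t ht
  have hanti : ∀ a : ℝ, 0 < a → a ≤ t → ψ t ≤ ψ a := by
    intro a ha hat
    have hmono : AntitoneOn ψ (Set.Icc a t) := by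
      apply antitoneOn_of_deriv_nonpos (convex_Icc a t)
      · intro x hx
        exact (hψ x (by linarith [hx.1])).continuousAt.continuousWithinAt
      · intro x hx
        rw [interior_Icc] at hx
        exact (hψ x (by linarith [hx.1])).differentiableAt.differentiableWithinAt
      · intro x hx
        rw [interior_Icc] at hx
        rw [(hψ x (by linarith [hx.1])).deriv]
        exact hψ_nonpos x (by linarith [hx.1])
    exact hmono (Set.left_mem_Icc.2 hat) (Set.right_mem_Icc.2 hat) hat
  -- limit of ψ at 0⁺
  have hΛ0 : Λ 0 = 1 := by simp [hΛdef]
  have hu0 : u 0 = 0 := by simp [hudef, hΛ0]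
  have hI0 : I 0 = ∫ ω, g ω ∂ν := by simp [hIdef]
  have hslope : Filter.Tendsto (fun τ => u τ / τ) (nhdsWithin 0 (Set.Ioi 0))
      (nhds (∫ ω, g ω ∂ν)) := by
    have h0 : HasDerivAt u (∫ ω, g ω ∂ν) 0 := by
      have := hu 0
      rwa [hI0, hΛ0, div_one] at this
    have := hasDerivAt_iff_tendsto_slope.mp h0
    have h2 := this.mono_left (nhdsWithin_mono 0 (fun x hx => by
      simp only [Set.mem_compl_iff, Set.mem_singleton_iff]
      exact ne_of_gt hx))
    refine h2.congr (fun τ => ?_)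
    simp [slope, hu0, div_eq_inv_mul]
  have hψlim : Filter.Tendsto ψ (nhdsWithin 0 (Set.Ioi 0))
      (nhds (∫ ω, g ω ∂ν)) := by
    have hK0 : Filter.Tendsto (fun τ : ℝ => K * τ) (nhdsWithin 0 (Set.Ioi 0))
        (nhds 0) := by
      have : Filter.Tendsto (fun τ : ℝ => K * τ) (nhds 0) (nhds (K * 0)) :=
        (continuous_const.mul continuous_id).tendsto 0
      simpa using this.mono_left nhdsWithin_le_nhds
    simpa using hslope.sub hK0
  have key : ψ t ≤ ∫ ω, g ω ∂ν := by
    refine ge_of_tendsto hψlim ?_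
    filter_upwards [Ioo_mem_nhdsGT_of_mem (Set.left_mem_Ico.2 ht)] with a ha
    exact hanti a ha.1 ha.2.le
  -- conclude
  have hut : u t ≤ K * t ^ 2 + t * ∫ ω, g ω ∂ν := by
    have : u t / t - K * t ≤ ∫ ω, g ω ∂ν := key
    rw [sub_le_iff_le_add, div_le_iff₀ ht] at this
    nlinarith [this]
  have := (Real.log_le_iff_le_exp (hΛpos t)).mp hut
  exact this
end

section
/- Let H be a real separable Hilbert space, ν a Borel probability measure on H and C > 0. Assume that for every bounded Fréchet differentiable φ : H → ℝ with inf_H φ > 0 and bounded gradient, ∫ φ ln φ dν − (∫ φ dν) ln(∫ φ dν) ≤ C ∫ ‖∇φ‖_H² / φ dν. Then for every bounded Fréchet differentiable g : H → ℝ with ‖∇g(x)‖_H ≤ 1 for all x ∈ H, and for every τ > 0, τ ∫ g e^{τ g} dν − (∫ e^{τ g} dν) ln(∫ e^{τ g} dν) ≤ C τ² ∫ e^{τ g} dν. -/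
open Real MeasureTheory

lemma exp_grad_aux {H : Type*} [NormedAddCommGroup H] [InnerProductSpace ℝ H]
    [CompleteSpace H] (g : H → ℝ) (Gg : H → H) (τ : ℝ) (x : H)
    (hg : HasGradientAt g (Gg x) x) :
    HasGradientAt (fun y => Real.exp (τ * g y))
      ((τ * Real.exp (τ * g x)) • Gg x) x := by
  have h1 : HasFDerivAt g (InnerProductSpace.toDual ℝ H (Gg x)) x := hg.hasFDerivAt
  have h2 : HasFDerivAt (fun y => τ * g y) (τ • InnerProductSpace.toDual ℝ H (Gg x)) x :=
    h1.const_mul τ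
  have h3 := (Real.hasDerivAt_exp (τ * g x)).comp_hasFDerivAt x h2
  have h4 := h3.hasGradientAt
  convert h4 using 1
  · rfl
  rw [_root_.map_smul, _root_.map_smul, LinearIsometryEquiv.symm_apply_apply, smul_smul, mul_comm]

/-- If `ν` satisfies the logarithmic Sobolev inequality
`∫ φ ln φ dν − (∫ φ dν) ln(∫ φ dν) ≤ C ∫ ‖∇φ‖²/φ dν` for every bounded Fréchet
differentiable `φ` with positive infimum and bounded gradient, then for every bounded
differentiable `g` with `‖∇g‖ ≤ 1` and every `τ > 0`,
`τ ∫ g e^{τg} dν − (∫ e^{τg} dν) ln(∫ e^{τg} dν) ≤ C τ² ∫ e^{τg} dν`. -/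
theorem stmt8
    {H : Type*} [NormedAddCommGroup H] [InnerProductSpace ℝ H] [CompleteSpace H]
    [SecondCountableTopology H] [MeasurableSpace H] [BorelSpace H]
    (ν : Measure H) [IsProbabilityMeasure ν]
    (C : ℝ) (hC : 0 < C)
    (hLSI : ∀ (φ : H → ℝ) (Gφ : H → H),
      (∀ x, HasGradientAt φ (Gφ x) x) →
      (∃ M, ∀ x, |φ x| ≤ M) →
      (∃ c > (0 : ℝ), ∀ x, c ≤ φ x) →
      (∃ M, ∀ x, ‖Gφ x‖ ≤ M) →
      ∫ x, φ x * Real.log (φ x) ∂ν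
          - (∫ x, φ x ∂ν) * Real.log (∫ x, φ x ∂ν)
        ≤ C * ∫ x, ‖Gφ x‖ ^ 2 / φ x ∂ν) :
    ∀ (g : H → ℝ) (Gg : H → H),
      (∀ x, HasGradientAt g (Gg x) x) →
      (∃ M, ∀ x, |g x| ≤ M) →
      (∀ x, ‖Gg x‖ ≤ 1) →
      ∀ τ > (0 : ℝ),
        τ * ∫ x, g x * Real.exp (τ * g x) ∂ν
            - (∫ x, Real.exp (τ * g x) ∂ν) * Real.log (∫ x, Real.exp (τ * g x) ∂ν)
          ≤ C * τ ^ 2 * ∫ x, Real.exp (τ * g x) ∂ν := by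
  intro g Gg hg hgb hGg τ hτ
  obtain ⟨M, hM⟩ := hgb
  have hM0 : 0 ≤ M := le_trans (abs_nonneg _) (hM 0)
  set φ : H → ℝ := fun x => Real.exp (τ * g x) with hφ
  set Gφ : H → H := fun x => (τ * Real.exp (τ * g x)) • Gg x with hGφ
  have hgradφ : ∀ x, HasGradientAt φ (Gφ x) x := fun x => exp_grad_aux g Gg τ x (hg x)
  have hφle : ∀ x, φ x ≤ Real.exp (τ * M) := fun x =>
    Real.exp_le_exp.2 (mul_le_mul_of_nonneg_left (le_trans (le_abs_self _) (hM x)) hτ.le)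
  have hφge : ∀ x, Real.exp (-(τ * M)) ≤ φ x := fun x =>
    Real.exp_le_exp.2 (by
      have := (abs_le.1 (hM x)).1
      nlinarith)
  have hφpos : ∀ x, 0 < φ x := fun x => Real.exp_pos _
  have hGφle : ∀ x, ‖Gφ x‖ ≤ τ * Real.exp (τ * M) := by
    intro x
    rw [hGφ, norm_smul]
    calc ‖τ * Real.exp (τ * g x)‖ * ‖Gg x‖ ≤ ‖τ * Real.exp (τ * g x)‖ * 1 :=
          mul_le_mul_of_nonneg_left (hGg x) (norm_nonneg _)
      _ = |τ| * Real.exp (τ * g x) := by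
          rw [mul_one, Real.norm_eq_abs, abs_mul, abs_of_pos (Real.exp_pos _)]
      _ ≤ τ * Real.exp (τ * M) := by
          rw [abs_of_pos hτ]
          exact mul_le_mul_of_nonneg_left (hφle x) hτ.le
  have key := hLSI φ Gφ hgradφ
    ⟨Real.exp (τ * M), fun x => by rw [abs_of_pos (hφpos x)]; exact hφle x⟩
    ⟨Real.exp (-(τ * M)), Real.exp_pos _, hφge⟩
    ⟨τ * Real.exp (τ * M), hGφle⟩
  -- rewrite ∫ φ log φ
  have hlog : (fun x => φ x * Real.log (φ x)) = fun x => τ * (g x * φ x) := by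
    funext x; rw [hφ]; simp [Real.log_exp]; ring
  rw [hlog, integral_const_mul] at key
  -- measurability of Gg
  have hgc : Continuous g := by
    have : Differentiable ℝ g := fun x => (hg x).hasFDerivAt.differentiableAt
    exact this.continuous
  have hGgm : Measurable Gg := by
    have hfd : ∀ x, fderiv ℝ g x = InnerProductSpace.toDual ℝ H (Gg x) := fun x =>
      (hg x).hasFDerivAt.fderiv
    have hGgeq : Gg = fun x =>
        (InnerProductSpace.toDual ℝ H).symm (fderiv ℝ g x) := by
      funext x; rw [hfd x, LinearIsometryEquiv.symm_apply_apply]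
    rw [hGgeq]
    exact ((InnerProductSpace.toDual ℝ H).symm.continuous.measurable).comp
      (measurable_fderiv ℝ g)
  have hφm : Measurable φ := (Real.continuous_exp.comp (continuous_const.mul hgc)).measurable
  have hintφ : Integrable φ ν := by
    refine ⟨hφm.aestronglyMeasurable, ?_⟩
    exact (hasFiniteIntegral_const (Real.exp (τ * M))).mono
      (Filter.Eventually.of_forall fun x => by
        simp [Real.norm_eq_abs, abs_of_pos (hφpos x), abs_of_pos (Real.exp_pos (τ * M)), hφle x])
  -- bound the RHS integral
  have hintGφ : Integrable (fun x => ‖Gφ x‖ ^ 2 / φ x) ν := by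
    have hGφm : Measurable Gφ := (hφm.const_mul τ).smul hGgm
    refine ⟨((hGφm.norm.pow_const 2).div hφm).aestronglyMeasurable, ?_⟩
    refine (hasFiniteIntegral_const ((τ * Real.exp (τ * M)) ^ 2 / Real.exp (-(τ * M)))).mono
      (Filter.Eventually.of_forall fun x => ?_)
    have h1 : ‖Gφ x‖ ^ 2 / φ x ≤ (τ * Real.exp (τ * M)) ^ 2 / Real.exp (-(τ * M)) :=
        div_le_div₀ (by positivity) (pow_le_pow_left₀ (norm_nonneg _) (hGφle x) 2)
          (Real.exp_pos _) (hφge x)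
    have h2 : (0:ℝ) ≤ ‖Gφ x‖ ^ 2 / φ x := div_nonneg (by positivity) (hφpos x).le
    rw [Real.norm_eq_abs, Real.norm_eq_abs, abs_of_nonneg h2,
      abs_of_nonneg (le_trans h2 h1)]
    exact h1
  have hbound : ∫ x, ‖Gφ x‖ ^ 2 / φ x ∂ν ≤ τ ^ 2 * ∫ x, φ x ∂ν := by
    rw [← integral_const_mul]
    refine integral_mono hintGφ (hintφ.const_mul _) fun x => ?_
    rw [hGφ, norm_smul, mul_pow, div_le_iff₀ (hφpos x)]
    have hGg2 : ‖Gg x‖ ^ 2 ≤ 1 := by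
      have := hGg x; nlinarith [norm_nonneg (Gg x)]
    have : ‖τ * Real.exp (τ * g x)‖ ^ 2 = τ ^ 2 * φ x ^ 2 := by
      rw [Real.norm_eq_abs, abs_mul, abs_of_pos hτ, abs_of_pos (hφpos x), mul_pow, hφ]
    rw [this]
    calc τ ^ 2 * φ x ^ 2 * ‖Gg x‖ ^ 2 ≤ τ ^ 2 * φ x ^ 2 * 1 := by
          apply mul_le_mul_of_nonneg_left hGg2; positivity
      _ = τ ^ 2 * φ x * φ x := by ring
  have hfinal := le_trans key (mul_le_mul_of_nonneg_left hbound hC.le)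
  simp only [hφ] at hfinal ⊢
  calc τ * ∫ x, g x * Real.exp (τ * g x) ∂ν
        - (∫ x, Real.exp (τ * g x) ∂ν) * Real.log (∫ x, Real.exp (τ * g x) ∂ν)
      ≤ C * (τ ^ 2 * ∫ x, Real.exp (τ * g x) ∂ν) := hfinal
    _ = C * τ ^ 2 * ∫ x, Real.exp (τ * g x) ∂ν := by ring
end

section
/- (Abstract form of Theorem 4.5/4.7 on Gaussian tails of Lipschitz functions.) Let H be a real separable Hilbert space, ν a Borel probability measure on H and C > 0. Assume that for every bounded 1-Lipschitz g : H → ℝ and every τ > 0, τ ∫ g e^{τ g} dν − m(τ) ln m(τ) ≤ C τ² m(τ), where m(τ) := ∫ e^{τ g} dν. Then every (not necessarily bounded) 1-Lipschitz function g : H → ℝ belongs to L¹(H, ν) and satisfies ν({ x ∈ H : g(x) ≥ m_ν(g) + t }) ≤ exp( − t² / (4C) ) for every t > 0. -/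
open Real MeasureTheory Filter

lemma int_of_bounded {Ω : Type*} [MeasurableSpace Ω] {ν : Measure Ω} [IsFiniteMeasure ν]
    {f : Ω → ℝ} (hf : Measurable f) {c : ℝ} (hb : ∀ x, ‖f x‖ ≤ c) : Integrable f ν :=
  ⟨hf.aestronglyMeasurable, HasFiniteIntegral.of_bounded (C := c) (ae_of_all _ hb)⟩

lemma Kpos {Ω : Type*} [MeasurableSpace Ω] {ν : Measure Ω} [IsProbabilityMeasure ν]
    {g : Ω → ℝ} {τ : ℝ} (hint : Integrable (fun x => Real.exp (τ * g x)) ν) :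
    0 < ∫ x, Real.exp (τ * g x) ∂ν :=
  ProbabilityTheory.mgf_pos hint

lemma chernoff {Ω : Type*} [MeasurableSpace Ω] (ν : Measure Ω) [IsProbabilityMeasure ν]
    (g : Ω → ℝ) (m C t : ℝ) (hC : 0 < C) (ht : 0 < t)
    (hint : Integrable (fun x => Real.exp (t / (2 * C) * g x)) ν)
    (hb : ∫ x, Real.exp (t / (2 * C) * g x) ∂ν
        ≤ Real.exp (t / (2 * C) * m + C * (t / (2 * C)) ^ 2)) :
    ν {x | m + t ≤ g x} ≤ ENNReal.ofReal (Real.exp (-(t ^ 2) / (4 * C))) := by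
  set τ := t / (2 * C) with hτdef
  have hτ : 0 < τ := div_pos ht (by linarith)
  have h1 := ProbabilityTheory.measure_ge_le_exp_mul_mgf (X := g) (μ := ν) (m + t) hτ.le hint
  have hmgf : ProbabilityTheory.mgf g ν τ = ∫ x, Real.exp (τ * g x) ∂ν := rfl
  rw [ENNReal.le_ofReal_iff_toReal_le (measure_ne_top _ _) (exp_nonneg _)]
  calc (ν {x | m + t ≤ g x}).toReal
      ≤ Real.exp (-τ * (m + t)) * ProbabilityTheory.mgf g ν τ := h1
    _ ≤ Real.exp (-τ * (m + t)) * Real.exp (τ * m + C * τ ^ 2) := by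
        rw [hmgf]; exact mul_le_mul_of_nonneg_left hb (exp_nonneg _)
    _ = Real.exp (-τ * (m + t) + (τ * m + C * τ ^ 2)) := (Real.exp_add _ _).symm
    _ = Real.exp (-(t ^ 2) / (4 * C)) := by
        congr 1
        rw [hτdef]
        field_simp
        ring

lemma cgf_le {Ω : Type*} [MeasurableSpace Ω] {ν : Measure Ω} [IsProbabilityMeasure ν]
    {g : Ω → ℝ} (hg : Measurable g) {M : ℝ} (hM : ∀ x, |g x| ≤ M) {C : ℝ}
    (hineq : ∀ τ > (0:ℝ), τ * ∫ x, g x * Real.exp (τ * g x) ∂ν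
        - (∫ x, Real.exp (τ * g x) ∂ν) * Real.log (∫ x, Real.exp (τ * g x) ∂ν)
      ≤ C * τ ^ 2 * ∫ x, Real.exp (τ * g x) ∂ν) :
    ∀ τ > (0:ℝ), Real.log (∫ x, Real.exp (τ * g x) ∂ν)
      ≤ τ * (∫ x, g x ∂ν) + C * τ ^ 2 := by
  set M₁ : ℝ := max M 0 with hM₁def
  have hM₁ : ∀ x, |g x| ≤ M₁ := fun x => (hM x).trans (le_max_left _ _)
  have hM₁0 : 0 ≤ M₁ := le_max_right _ _
  set K : ℝ → ℝ := fun τ => ∫ x, Real.exp (τ * g x) ∂ν with hKdef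
  set D : ℝ → ℝ := fun τ => ∫ x, g x * Real.exp (τ * g x) ∂ν with hDdef
  have hexp_bdd : ∀ (τ : ℝ) (x : Ω), ‖Real.exp (τ * g x)‖ ≤ Real.exp (|τ| * M₁) := by
    intro τ x
    rw [Real.norm_eq_abs, abs_of_pos (exp_pos _)]
    apply Real.exp_le_exp.2
    calc τ * g x ≤ |τ * g x| := le_abs_self _
      _ = |τ| * |g x| := abs_mul _ _
      _ ≤ |τ| * M₁ := by
          exact mul_le_mul_of_nonneg_left (hM₁ x) (abs_nonneg _)
  have hKint : ∀ τ : ℝ, Integrable (fun x => Real.exp (τ * g x)) ν := fun τ =>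
    int_of_bounded ((hg.const_mul τ).exp) (hexp_bdd τ)
  have hKpos : ∀ τ : ℝ, 0 < K τ := fun τ => Kpos (hKint τ)
  have hKderiv : ∀ τ₀ : ℝ, HasDerivAt K (D τ₀) τ₀ := by
    intro τ₀
    have := hasDerivAt_integral_of_dominated_loc_of_deriv_le (μ := ν)
      (F := fun τ x => Real.exp (τ * g x)) (F' := fun τ x => g x * Real.exp (τ * g x))
      (x₀ := τ₀) (bound := fun _ => M₁ * Real.exp ((|τ₀| + 1) * M₁)) (s := Metric.ball τ₀ 1) (Metric.ball_mem_nhds τ₀ one_pos)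
      (Filter.Eventually.of_forall fun τ => ((hg.const_mul τ).exp).aestronglyMeasurable)
      (hKint τ₀)
      ((hg.mul ((hg.const_mul τ₀).exp)).aestronglyMeasurable)
      ?_ (integrable_const _) ?_
    · exact this.2
    · refine ae_of_all _ fun a τ hτ => ?_
      have hτb : |τ| ≤ |τ₀| + 1 := by
        have := mem_ball_iff_norm.1 hτ
        rw [Real.norm_eq_abs] at this
        calc |τ| = |τ₀ + (τ - τ₀)| := by ring_nf
          _ ≤ |τ₀| + |τ - τ₀| := abs_add_le _ _
          _ ≤ |τ₀| + 1 := by linarith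
      rw [norm_mul, Real.norm_eq_abs, Real.norm_eq_abs, abs_of_pos (exp_pos _)]
      have h2 : Real.exp (τ * g a) ≤ Real.exp ((|τ₀| + 1) * M₁) := by
        apply Real.exp_le_exp.2
        calc τ * g a ≤ |τ| * |g a| := by
              rw [← abs_mul]; exact le_abs_self _
          _ ≤ (|τ₀| + 1) * M₁ := by
              exact mul_le_mul hτb (hM₁ a) (abs_nonneg _) (by positivity)
      exact mul_le_mul (hM₁ a) h2 (exp_pos _).le hM₁0
    · refine ae_of_all _ fun a τ hτ => ?_
      simpa [mul_comm] using ((hasDerivAt_mul_const (g a)).exp (x := τ))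
  have hφ : ∀ τ : ℝ, HasDerivAt (fun s => Real.log (K s)) (D τ / K τ) τ := fun τ =>
    (hKderiv τ).log (hKpos τ).ne'
  set m : ℝ := ∫ x, g x ∂ν with hmdef
  set f : ℝ → ℝ := fun s => Real.log (K s) / s - C * s with hfdef
  have hfderiv : ∀ x ∈ Set.Ioi (0:ℝ),
      HasDerivAt f ((D x / K x * x - Real.log (K x) * 1) / x ^ 2 - C * 1) x := by
    intro x hx
    exact ((hφ x).div (hasDerivAt_id x) (ne_of_gt hx)).sub ((hasDerivAt_id x).const_mul C)
  have hanti : AntitoneOn f (Set.Ioi 0) := by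
    apply antitoneOn_of_deriv_nonpos (convex_Ioi 0)
    · exact fun x hx => ((hfderiv x hx).differentiableAt).continuousAt.continuousWithinAt
    · rw [interior_Ioi]
      exact fun x hx => ((hfderiv x hx).differentiableAt).differentiableWithinAt
    · rw [interior_Ioi]
      intro x hx
      rw [(hfderiv x hx).deriv]
      have hx0 : (0:ℝ) < x := hx
      have hK := hKpos x
      have hi := hineq x hx0
      have key : D x / K x * x - Real.log (K x) ≤ C * x ^ 2 := by
        rw [div_mul_eq_mul_div, sub_le_iff_le_add, div_le_iff₀ hK]
        nlinarith
      have h2 : (D x / K x * x - Real.log (K x) * 1) / x ^ 2 ≤ C := by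
        rw [div_le_iff₀ (by positivity : (0:ℝ) < x ^ 2), mul_one]
        linarith
      linarith
  have hK0 : K 0 = 1 := by simp [hKdef]
  have hD0 : D 0 = m := by simp [hDdef, hmdef]
  have hslope : Filter.Tendsto (fun s => Real.log (K s) / s) (nhdsWithin 0 (Set.Ioi 0)) (nhds m) := by
    have h0 := hφ 0
    rw [hD0, hK0, div_one] at h0
    have := hasDerivAt_iff_tendsto_slope.1 h0
    have h2 : Filter.Tendsto (slope (fun s => Real.log (K s)) 0)
        (nhdsWithin 0 (Set.Ioi 0)) (nhds m) :=
      this.mono_left (nhdsWithin_mono 0 (fun x hx => ne_of_gt hx))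
    refine h2.congr' ?_
    filter_upwards [self_mem_nhdsWithin] with s hs
    rw [slope_def_field, hK0, Real.log_one]
    simp [div_eq_mul_inv, mul_comm]
  have hlim : Filter.Tendsto f (nhdsWithin 0 (Set.Ioi 0)) (nhds m) := by
    have h2 : Filter.Tendsto (fun s : ℝ => C * s) (nhdsWithin 0 (Set.Ioi 0)) (nhds 0) := by
      have : Filter.Tendsto (fun s : ℝ => C * s) (nhds 0) (nhds (C * 0)) :=
        (continuous_const.mul continuous_id).tendsto 0
      rw [mul_zero] at this
      exact this.mono_left nhdsWithin_le_nhds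
    have := hslope.sub h2
    rw [sub_zero] at this
    exact this
  intro τ hτ
  have hfm : f τ ≤ m := by
    refine ge_of_tendsto hlim ?_
    filter_upwards [Ioc_mem_nhdsGT_of_mem (Set.left_mem_Ico.2 hτ)] with s hs
    exact hanti hs.1 hτ hs.2
  have : Real.log (K τ) / τ ≤ m + C * τ := by
    rw [hfdef] at hfm
    simp only at hfm
    linarith
  rw [div_le_iff₀ hτ] at this
  calc Real.log (K τ) ≤ (m + C * τ) * τ := this
    _ = τ * m + C * τ ^ 2 := by ring

lemma aux
    {H : Type*} [NormedAddCommGroup H] [InnerProductSpace ℝ H] [CompleteSpace H]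
    [SecondCountableTopology H] [MeasurableSpace H] [BorelSpace H]
    (ν : Measure H) [IsProbabilityMeasure ν]
    (C : ℝ) (hC : 0 < C)
    (h : ∀ g : H → ℝ, (∃ M, ∀ x, |g x| ≤ M) → LipschitzWith 1 g →
      ∀ τ > (0 : ℝ),
        τ * ∫ x, g x * Real.exp (τ * g x) ∂ν
            - (∫ x, Real.exp (τ * g x) ∂ν) * Real.log (∫ x, Real.exp (τ * g x) ∂ν)
          ≤ C * τ ^ 2 * ∫ x, Real.exp (τ * g x) ∂ν)
    (g : H → ℝ) (hg : LipschitzWith 1 g) :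
    ∀ τ > (0:ℝ), Integrable (fun x => Real.exp (τ * g x)) ν ∧
      ∀ m' : ℝ,
        Tendsto (fun n : ℕ => ∫ x, max (min (g x) (n:ℝ)) (-(n:ℝ)) ∂ν) atTop (nhds m') →
        ∫ x, Real.exp (τ * g x) ∂ν ≤ Real.exp (τ * m' + C * τ ^ 2) := by
  have hgmeas : Measurable g := hg.continuous.measurable
  set gn : ℕ → H → ℝ := fun n x => max (min (g x) (n:ℝ)) (-(n:ℝ)) with hgndef
  have hgnlip : ∀ n, LipschitzWith 1 (gn n) := fun n => (hg.min_const _).max_const _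
  have hgnmeas : ∀ n, Measurable (gn n) := fun n => (hgnlip n).continuous.measurable
  have hgnbdd : ∀ n x, |gn n x| ≤ (n:ℝ) := by
    intro n x
    rw [abs_le]
    constructor
    · exact le_trans (neg_le_neg (le_refl _)) (le_max_right _ _)
    · exact max_le (min_le_right _ _) (by simp [neg_le_self_iff, Nat.cast_nonneg])
  have heq : ∀ (x : H) (n : ℕ), |g x| ≤ (n:ℝ) → gn n x = g x := by
    intro x n hx
    rw [abs_le] at hx
    rw [hgndef]
    simp only
    rw [min_eq_left hx.2, max_eq_left (le_trans (neg_le_neg (le_refl _)) ?_)]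
    · exact hx.1
  have hptwise : ∀ x : H, ∀ᶠ n : ℕ in atTop, gn n x = g x := by
    intro x
    filter_upwards [eventually_ge_atTop ⌈|g x|⌉₊] with n hn
    exact heq x n (le_trans (Nat.le_ceil _) (Nat.cast_le.2 hn))
  set mn : ℕ → ℝ := fun n => ∫ x, gn n x ∂ν with hmndef
  -- per-n integrability and mgf bound
  have hintn : ∀ (n : ℕ) (τ : ℝ), Integrable (fun x => Real.exp (τ * gn n x)) ν := by
    intro n τ
    refine int_of_bounded ((hgnmeas n).const_mul τ |>.exp) (c := Real.exp (|τ| * n)) ?_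
    intro x
    rw [Real.norm_eq_abs, abs_of_pos (exp_pos _)]
    apply Real.exp_le_exp.2
    calc τ * gn n x ≤ |τ * gn n x| := le_abs_self _
      _ = |τ| * |gn n x| := abs_mul _ _
      _ ≤ |τ| * n := mul_le_mul_of_nonneg_left (hgnbdd n x) (abs_nonneg _)
  have hexpbd : ∀ (n : ℕ) (τ : ℝ), 0 < τ →
      ∫ x, Real.exp (τ * gn n x) ∂ν ≤ Real.exp (τ * mn n + C * τ ^ 2) := by
    intro n τ hτ
    have hcgf := cgf_le (hgnmeas n) (hgnbdd n) (h (gn n) ⟨n, hgnbdd n⟩ (hgnlip n)) τ hτ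
    calc ∫ x, Real.exp (τ * gn n x) ∂ν
        = Real.exp (Real.log (∫ x, Real.exp (τ * gn n x) ∂ν)) :=
          (Real.exp_log (Kpos (hintn n τ))).symm
      _ ≤ Real.exp (τ * mn n + C * τ ^ 2) := Real.exp_le_exp.2 hcgf
  -- tail bound for bounded lipschitz functions
  have htail : ∀ f : H → ℝ, Measurable f → (∃ M, ∀ x, |f x| ≤ M) → LipschitzWith 1 f →
      ∀ t > (0:ℝ), ν {x | (∫ y, f y ∂ν) + t ≤ f x}
        ≤ ENNReal.ofReal (Real.exp (-(t ^ 2) / (4 * C))) := by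
    intro f hf hfb hfl t ht
    obtain ⟨M, hM⟩ := hfb
    set τ := t / (2 * C) with hτdef
    have hτ : 0 < τ := div_pos ht (by linarith)
    have hint : Integrable (fun x => Real.exp (τ * f x)) ν := by
      refine int_of_bounded ((hf.const_mul τ).exp) (c := Real.exp (|τ| * M)) ?_
      intro x
      rw [Real.norm_eq_abs, abs_of_pos (exp_pos _)]
      apply Real.exp_le_exp.2
      calc τ * f x ≤ |τ * f x| := le_abs_self _
        _ = |τ| * |f x| := abs_mul _ _
        _ ≤ |τ| * M := mul_le_mul_of_nonneg_left (hM x) (abs_nonneg _)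
    have hcgf := cgf_le hf hM (h f ⟨M, hM⟩ hfl) τ hτ
    refine chernoff ν f _ C t hC ht hint ?_
    calc ∫ x, Real.exp (τ * f x) ∂ν
        = Real.exp (Real.log (∫ x, Real.exp (τ * f x) ∂ν)) := (Real.exp_log (Kpos hint)).symm
      _ ≤ Real.exp (τ * (∫ y, f y ∂ν) + C * τ ^ 2) := Real.exp_le_exp.2 hcgf
      _ = Real.exp (t / (2 * C) * (∫ y, f y ∂ν) + C * (t / (2 * C)) ^ 2) := rfl
  -- boundedness of the means mn
  set t₀ : ℝ := Real.sqrt (8 * C) with ht₀def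
  have ht₀ : 0 < t₀ := Real.sqrt_pos.2 (by linarith)
  have he2 : Real.exp (-(t₀ ^ 2) / (4 * C)) = Real.exp (-2) := by
    rw [ht₀def, Real.sq_sqrt (by linarith : (0:ℝ) ≤ 8 * C)]
    congr 1
    field_simp
    ring
  have hlt1 : ENNReal.ofReal (Real.exp (-(t₀ ^ 2) / (4 * C))) < 1 := by
    rw [he2]
    refine ENNReal.ofReal_lt_one.2 ?_
    calc Real.exp (-2) < Real.exp 0 := Real.exp_lt_exp.2 (by norm_num)
      _ = 1 := Real.exp_zero
  obtain ⟨k, hk⟩ : ∃ k : ℕ, ENNReal.ofReal (Real.exp (-(t₀ ^ 2) / (4 * C)))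
      < ν {x | |g x| ≤ (k:ℝ)} := by
    have hmono : Monotone (fun k : ℕ => {x : H | |g x| ≤ (k:ℝ)}) := by
      intro a b hab x hx
      exact le_trans hx (show (a:ℝ) ≤ (b:ℝ) from Nat.cast_le.2 hab)
    have hunion : (⋃ k : ℕ, {x : H | |g x| ≤ (k:ℝ)}) = Set.univ := by
      ext x
      simp only [Set.mem_iUnion, Set.mem_setOf_eq, Set.mem_univ, iff_true]
      exact ⟨⌈|g x|⌉₊, Nat.le_ceil _⟩
    have htd := tendsto_measure_iUnion_atTop (μ := ν) hmono
    rw [hunion, measure_univ] at htd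
    exact (htd.eventually (eventually_gt_nhds hlt1)).exists
  have hmb : ∀ n : ℕ, k ≤ n → |mn n| ≤ (k:ℝ) + t₀ := by
    intro n hn
    by_contra habs
    push_neg at habs
    have hkn : (k:ℝ) ≤ (n:ℝ) := Nat.cast_le.2 hn
    rcases lt_abs.1 habs with h1 | h1
    · -- mn n > k + t₀ : use tail for -(gn n)
      have hsub : {x : H | |g x| ≤ (k:ℝ)} ⊆
          {x | (∫ y, (-(gn n y)) ∂ν) + t₀ ≤ -(gn n x)} := by
        intro x hx
        have hgx : gn n x = g x := heq x n (le_trans hx hkn)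
        have : ∫ y, (-(gn n y)) ∂ν = -(mn n) := by rw [integral_neg]
        rw [Set.mem_setOf_eq, this, hgx]
        have : g x ≤ (k:ℝ) := le_trans (le_abs_self _) hx
        linarith
      have hνle := le_trans (measure_mono hsub)
        (htail (fun x => -(gn n x)) (hgnmeas n).neg
          ⟨n, fun x => by rw [abs_neg]; exact hgnbdd n x⟩
          ((hgnlip n).neg) t₀ ht₀)
      exact absurd (lt_of_lt_of_le hk hνle) (lt_irrefl _)
    · -- mn n < -(k + t₀) : use tail for gn n
      have hsub : {x : H | |g x| ≤ (k:ℝ)} ⊆ {x | (∫ y, gn n y ∂ν) + t₀ ≤ gn n x} := by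
        intro x hx
        have hgx : gn n x = g x := heq x n (le_trans hx hkn)
        rw [Set.mem_setOf_eq, hgx]
        have h2 : -(k:ℝ) ≤ g x := neg_le_of_abs_le hx
        have h3 : (∫ y, gn n y ∂ν) = mn n := rfl
        rw [h3]
        linarith
      have hνle := le_trans (measure_mono hsub)
        (htail (gn n) (hgnmeas n) ⟨n, hgnbdd n⟩ (hgnlip n) t₀ ht₀)
      exact absurd (lt_of_lt_of_le hk hνle) (lt_irrefl _)
  -- now the conclusion for each τ
  intro τ hτ
  have hmeasτ : Measurable fun x => Real.exp (τ * g x) := (hgmeas.const_mul τ).exp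
  have hptlim : ∀ x : H, (fun n : ℕ => ENNReal.ofReal (Real.exp (τ * gn n x)))
      =ᶠ[atTop] (fun _ => ENNReal.ofReal (Real.exp (τ * g x))) := by
    intro x
    filter_upwards [hptwise x] with n hn
    rw [hn]
  have hlin : ∫⁻ x, ENNReal.ofReal (Real.exp (τ * g x)) ∂ν
      ≤ liminf (fun n : ℕ => ENNReal.ofReal (Real.exp (τ * mn n + C * τ ^ 2))) atTop := by
    calc ∫⁻ x, ENNReal.ofReal (Real.exp (τ * g x)) ∂ν
        = ∫⁻ x, liminf (fun n : ℕ => ENNReal.ofReal (Real.exp (τ * gn n x))) atTop ∂ν := by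
          apply lintegral_congr
          intro x
          rw [liminf_congr (hptlim x), liminf_const]
      _ ≤ liminf (fun n : ℕ => ∫⁻ x, ENNReal.ofReal (Real.exp (τ * gn n x)) ∂ν) atTop :=
          lintegral_liminf_le fun n =>
            ENNReal.measurable_ofReal.comp ((hgnmeas n).const_mul τ |>.exp)
      _ ≤ liminf (fun n : ℕ => ENNReal.ofReal (Real.exp (τ * mn n + C * τ ^ 2))) atTop := by
          refine liminf_le_liminf (Eventually.of_forall fun n => ?_)
          rw [← ofReal_integral_eq_lintegral_ofReal (hintn n τ)
            (ae_of_all _ fun x => (exp_pos _).le)]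
          exact ENNReal.ofReal_le_ofReal (hexpbd n τ hτ)
  have hfin : ∫⁻ x, ENNReal.ofReal (Real.exp (τ * g x)) ∂ν
      ≤ ENNReal.ofReal (Real.exp (τ * ((k:ℝ) + t₀) + C * τ ^ 2)) := by
    refine le_trans hlin ?_
    have : liminf (fun n : ℕ => ENNReal.ofReal (Real.exp (τ * mn n + C * τ ^ 2))) atTop
        ≤ liminf (fun _ : ℕ => ENNReal.ofReal (Real.exp (τ * ((k:ℝ) + t₀) + C * τ ^ 2))) atTop := by
      refine liminf_le_liminf ?_
      filter_upwards [eventually_ge_atTop k] with n hn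
      apply ENNReal.ofReal_le_ofReal
      apply Real.exp_le_exp.2
      have := (abs_le.1 (hmb n hn)).2
      nlinarith
    rwa [liminf_const] at this
  have hintτ : Integrable (fun x => Real.exp (τ * g x)) ν := by
    refine ⟨hmeasτ.aestronglyMeasurable, ?_⟩
    rw [hasFiniteIntegral_iff_norm]
    have heqn : ∀ x : H, ENNReal.ofReal ‖Real.exp (τ * g x)‖ =
        ENNReal.ofReal (Real.exp (τ * g x)) := by
      intro x
      rw [Real.norm_eq_abs, abs_of_pos (exp_pos _)]
    calc ∫⁻ x, ENNReal.ofReal ‖Real.exp (τ * g x)‖ ∂ν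
        = ∫⁻ x, ENNReal.ofReal (Real.exp (τ * g x)) ∂ν := lintegral_congr heqn
      _ ≤ ENNReal.ofReal (Real.exp (τ * ((k:ℝ) + t₀) + C * τ ^ 2)) := hfin
      _ < ⊤ := ENNReal.ofReal_lt_top
  refine ⟨hintτ, ?_⟩
  intro m' hm'
  have hliminf_eq : liminf (fun n : ℕ => ENNReal.ofReal (Real.exp (τ * mn n + C * τ ^ 2))) atTop
      = ENNReal.ofReal (Real.exp (τ * m' + C * τ ^ 2)) := by
    have h1 : Tendsto (fun n : ℕ => τ * mn n + C * τ ^ 2) atTop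
        (nhds (τ * m' + C * τ ^ 2)) := by
      exact ((hm'.const_mul τ).add_const _)
    have h2 : Tendsto (fun n : ℕ => ENNReal.ofReal (Real.exp (τ * mn n + C * τ ^ 2))) atTop
        (nhds (ENNReal.ofReal (Real.exp (τ * m' + C * τ ^ 2)))) :=
      (ENNReal.continuous_ofReal.tendsto _).comp ((Real.continuous_exp.tendsto _).comp h1)
    exact h2.liminf_eq
  have hfin2 : ENNReal.ofReal (∫ x, Real.exp (τ * g x) ∂ν)
      ≤ ENNReal.ofReal (Real.exp (τ * m' + C * τ ^ 2)) := by
    rw [ofReal_integral_eq_lintegral_ofReal hintτ (ae_of_all _ fun x => (exp_pos _).le)]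
    rw [← hliminf_eq]
    exact hlin
  exact (ENNReal.ofReal_le_ofReal_iff (exp_nonneg _)).1 hfin2

/-- Gaussian tails of Lipschitz functions: if for every bounded 1-Lipschitz `g` and
every `τ > 0`, `τ ∫ g e^{τg} dν − m(τ) ln m(τ) ≤ C τ² m(τ)` where `m(τ) = ∫ e^{τg} dν`,
then every 1-Lipschitz `g` is `ν`-integrable and
`ν({g ≥ m_ν(g) + t}) ≤ exp(−t²/(4C))` for every `t > 0`. -/
theorem stmt9
    {H : Type*} [NormedAddCommGroup H] [InnerProductSpace ℝ H] [CompleteSpace H]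
    [SecondCountableTopology H] [MeasurableSpace H] [BorelSpace H]
    (ν : Measure H) [IsProbabilityMeasure ν]
    (C : ℝ) (hC : 0 < C)
    (h : ∀ g : H → ℝ, (∃ M, ∀ x, |g x| ≤ M) → LipschitzWith 1 g →
      ∀ τ > (0 : ℝ),
        τ * ∫ x, g x * Real.exp (τ * g x) ∂ν
            - (∫ x, Real.exp (τ * g x) ∂ν) * Real.log (∫ x, Real.exp (τ * g x) ∂ν)
          ≤ C * τ ^ 2 * ∫ x, Real.exp (τ * g x) ∂ν) :
    ∀ g : H → ℝ, LipschitzWith 1 g →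
      Integrable g ν ∧
      ∀ t > (0 : ℝ),
        ν {x | (∫ y, g y ∂ν) + t ≤ g x}
          ≤ ENNReal.ofReal (Real.exp (-(t ^ 2) / (4 * C))) := by
  intro g hg
  have hgmeas : Measurable g := hg.continuous.measurable
  have hInt1 : Integrable (fun x => Real.exp (1 * g x)) ν := (aux ν C hC h g hg 1 one_pos).1
  have hInt2 : Integrable (fun x => Real.exp (1 * (-g) x)) ν :=
    (aux ν C hC h (-g) hg.neg 1 one_pos).1
  have hIntg : Integrable g ν := by
    refine ((hInt1.add hInt2).mono' hgmeas.aestronglyMeasurable ?_)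
    refine ae_of_all _ fun x => ?_
    simp only [Pi.neg_apply, one_mul, Pi.add_apply]
    rw [Real.norm_eq_abs]
    have h1 := Real.add_one_le_exp (g x)
    have h2 := Real.add_one_le_exp (-(g x))
    have h3 := Real.exp_pos (g x)
    have h4 := Real.exp_pos (-(g x))
    rcases abs_cases (g x) with ⟨he, _⟩ | ⟨he, _⟩ <;> rw [he] <;> linarith
  refine ⟨hIntg, ?_⟩
  -- convergence of truncated means
  set gn : ℕ → H → ℝ := fun n x => max (min (g x) (n:ℝ)) (-(n:ℝ)) with hgndef
  have hgnlip : ∀ n, LipschitzWith 1 (gn n) := fun n => (hg.min_const _).max_const _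
  have hgnabs : ∀ (n : ℕ) (x : H), |gn n x| ≤ |g x| := by
    intro n x
    rw [abs_le]
    constructor
    · refine le_trans ?_ (le_max_left _ _)
      exact le_min (neg_abs_le _) (le_trans (neg_nonpos_of_nonneg (abs_nonneg _))
        (Nat.cast_nonneg n))
    · refine max_le (le_trans (min_le_left _ _) (le_abs_self _)) ?_
      exact le_trans (neg_nonpos_of_nonneg (Nat.cast_nonneg n)) (abs_nonneg _)
  have hptwise : ∀ x : H, Tendsto (fun n : ℕ => gn n x) atTop (nhds (g x)) := by
    intro x
    refine tendsto_const_nhds.congr' ?_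
    filter_upwards [eventually_ge_atTop ⌈|g x|⌉₊] with n hn
    have hx : |g x| ≤ (n:ℝ) := le_trans (Nat.le_ceil _) (Nat.cast_le.2 hn)
    rw [abs_le] at hx
    rw [hgndef]
    simp only
    rw [min_eq_left hx.2, max_eq_left (le_trans (neg_le_neg (le_refl _)) hx.1)]
  have hmn : Tendsto (fun n : ℕ => ∫ x, gn n x ∂ν) atTop (nhds (∫ x, g x ∂ν)) := by
    refine tendsto_integral_of_dominated_convergence (fun x => |g x|)
      (fun n => ((hgnlip n).continuous.measurable).aestronglyMeasurable)
      hIntg.abs (fun n => ae_of_all _ fun x => ?_) (ae_of_all _ hptwise)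
    rw [Real.norm_eq_abs]
    exact hgnabs n x
  intro t ht
  set τ := t / (2 * C) with hτdef
  have hτ : 0 < τ := div_pos ht (by linarith)
  obtain ⟨hint, hbd⟩ := aux ν C hC h g hg τ hτ
  exact chernoff ν g _ C t hC ht hint (hbd _ hmn)
end

section
/- (Logarithmic Sobolev inequality implies the Poincaré inequality.) Let H be a real separable Hilbert space, ν a Borel probability measure on H and C > 0. Assume that for every bounded Fréchet differentiable f : H → ℝ with bounded gradient, ∫ f² ln f² dν − (∫ f² dν) ln(∫ f² dν) ≤ 4C ∫ ‖∇f‖_H² dν (with the convention 0·ln 0 = 0). Then for every such f, ∫ f² dν − (∫ f dν)² ≤ 2C ∫ ‖∇f‖_H² dν. -/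
set_option maxHeartbeats 1000000

open Real MeasureTheory

lemma taylor_xlogx {u : ℝ} (hu : |u| ≤ 1/2) :
    |(1+u) * Real.log (1+u) - (u + u^2/2)| ≤ 4 * |u|^3 := by
  have h1 : |(-u : ℝ)| < 1 := by rw [abs_neg]; linarith [abs_nonneg u]
  have h := Real.abs_log_sub_add_sum_range_le h1 2
  simp only [Finset.sum_range_succ, Finset.sum_range_zero] at h
  norm_num [abs_neg, sub_neg_eq_add] at h
  have hden : |u|^3 / (1 - |u|) ≤ 2 * |u|^3 := by
    rw [div_le_iff₀ (by linarith [abs_nonneg u])]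
    nlinarith [pow_nonneg (abs_nonneg u) 3, abs_nonneg u]
  set r := Real.log (1+u) - (u - u^2/2) with hr
  have hrb : |r| ≤ 2 * |u|^3 := by
    have heq : -u + u^2/2 + Real.log (1+u) = r := by rw [hr]; ring
    rw [heq] at h; linarith
  have key : (1+u) * Real.log (1+u) - (u + u^2/2) = -u^3/2 + (1+u)*r := by
    have : Real.log (1+u) = u - u^2/2 + r := by rw [hr]; ring
    rw [this]; ring
  rw [key]
  have habs : |(-u^3/2 + (1+u)*r)| ≤ |u|^3/2 + |1+u| * |r| := by
    calc |(-u^3/2 + (1+u)*r)| ≤ |(-u^3/2)| + |(1+u)*r| := abs_add_le _ _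
    _ = |u|^3/2 + |1+u| * |r| := by rw [abs_mul, abs_div, abs_neg, abs_pow]; norm_num
  have h1u' : |1+u| ≤ 3/2 := by
    rw [abs_le] at hu ⊢; constructor <;> linarith
  have : |1+u| * |r| ≤ (3/2) * (2*|u|^3) :=
    mul_le_mul h1u' hrb (abs_nonneg r) (by norm_num)
  nlinarith [pow_nonneg (abs_nonneg u) 3]

lemma grad_affine {H : Type*} [NormedAddCommGroup H] [InnerProductSpace ℝ H] [CompleteSpace H]
    {f : H → ℝ} {g : H} {x : H} (ε : ℝ) (h : HasGradientAt f g x) :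
    HasGradientAt (fun y => 1 + ε * f y) (ε • g) x := by
  rw [hasGradientAt_iff_hasFDerivAt] at h ⊢
  have h2 : HasFDerivAt (fun y => 1 + ε * f y)
      (ε • ((InnerProductSpace.toDual ℝ H) g : H →L[ℝ] ℝ)) x := (h.const_mul ε).const_add 1
  convert h2 using 1
  · rfl
  · simp [_root_.map_smul]


lemma ptw_lower {M ε v : ℝ} (hM1 : 1 ≤ M) (hε : 0 < ε) (hεM : ε*M ≤ 1/8) (hv : |v| ≤ M) :
    2*ε*v + 3*ε^2*v^2 + 2*ε^3*v^3 + (ε^4/2)*v^4 - 108*ε^3*M^3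
      ≤ (1 + ε*v)^2 * Real.log ((1+ε*v)^2) := by
  have hMpos : (0:ℝ) < M := by linarith
  have hfx := abs_le.1 hv
  have hfx2 : v^2 ≤ M^2 := by nlinarith [hfx.1, hfx.2]
  have hsq2 : ε^2*v^2 ≤ ε*M := by
    have h1 : ε^2*v^2 ≤ ε^2*M^2 := mul_le_mul_of_nonneg_left hfx2 (sq_nonneg ε)
    nlinarith [mul_nonneg hε.le hMpos.le, hεM]
  set u : ℝ := 2*ε*v + ε^2*v^2 with hu
  have huabs : |u| ≤ 3*ε*M := by
    rw [abs_le]; constructor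
    · rw [hu]
      nlinarith [mul_le_mul_of_nonneg_left hfx.1 hε.le,
        mul_nonneg hε.le hMpos.le, mul_nonneg (sq_nonneg ε) (sq_nonneg v)]
    · rw [hu]
      nlinarith [mul_le_mul_of_nonneg_left hfx.2 hε.le, hsq2]
  have hu2' : |u| ≤ 1/2 := huabs.trans (by nlinarith [mul_nonneg hε.le hMpos.le])
  have hT := (abs_le.1 (taylor_xlogx hu2')).1
  have hsq : (1 + ε*v)^2 = 1 + u := by rw [hu]; ring
  rw [hsq]
  have habs3 : |u|^3 ≤ 27*ε^3*M^3 := by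
    calc |u|^3 ≤ (3*ε*M)^3 := pow_le_pow_left₀ (abs_nonneg u) huabs 3
    _ = 27*ε^3*M^3 := by ring
  have hpoly : u + u^2/2 = 2*ε*v + 3*ε^2*v^2 + 2*ε^3*v^3 + (ε^4/2)*v^4 := by rw [hu]; ring
  linarith

lemma philog_bound {u : ℝ} (h1 : -(1:ℝ)/8 ≤ u) (h2 : u ≤ 1/8) :
    |(1+u)^2 * Real.log ((1+u)^2)| ≤ 2 := by
  set g : ℝ := (1 + u)^2 with hg
  have hg1 : (1:ℝ)/2 ≤ g := by rw [hg]; nlinarith [sq_nonneg u]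
  have hg2 : g ≤ 2 := by
    rw [hg]
    nlinarith [mul_nonneg (by linarith : (0:ℝ) ≤ 1/8 - u) (by linarith : (0:ℝ) ≤ 1/8 + u)]
  have hgpos : (0:ℝ) < g := by linarith
  have hlog1 : Real.log g ≤ 1 := by
    have := Real.log_le_sub_one_of_pos hgpos; linarith
  have hlog2 : -1 ≤ Real.log g := by
    have ha : Real.log g⁻¹ ≤ g⁻¹ - 1 := Real.log_le_sub_one_of_pos (by positivity)
    have hb : g⁻¹ ≤ 2 := by rw [inv_le_comm₀ hgpos (by norm_num)]; linarith
    rw [Real.log_inv] at ha; linarith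
  rw [abs_mul, abs_of_nonneg (le_of_lt hgpos)]
  have hla : |Real.log g| ≤ 1 := abs_le.2 ⟨hlog2, hlog1⟩
  nlinarith [abs_nonneg (Real.log g)]

lemma mean_upper {M ε a b s : ℝ} (hM1 : 1 ≤ M) (hε : 0 < ε) (hεM : ε*M ≤ 1/8)
    (haM : |a| ≤ M) (hbM : |b| ≤ M^2) (hbnn : 0 ≤ b) (hs : s = 2*ε*a + ε^2*b) :
    (1+s) * Real.log (1+s)
      ≤ 2*ε*a + ε^2*b + 2*ε^2*a^2 + 2*ε^3*(a*b) + (ε^4/2)*b^2 + 108*ε^3*M^3 := by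
  have hMpos : (0:ℝ) < M := by linarith
  have h1 := abs_le.1 haM
  have h2 := abs_le.1 hbM
  have hsabs : |s| ≤ 3*ε*M := by
    rw [abs_le]; constructor
    · rw [hs]
      nlinarith [mul_le_mul_of_nonneg_left h1.1 hε.le, mul_nonneg hε.le hMpos.le,
        mul_nonneg (sq_nonneg ε) hbnn]
    · rw [hs]
      have hb1 : ε^2*b ≤ ε^2*M^2 := mul_le_mul_of_nonneg_left h2.2 (sq_nonneg ε)
      nlinarith [mul_le_mul_of_nonneg_left h1.2 hε.le, mul_nonneg hε.le hMpos.le, hεM]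
  have hs2 : |s| ≤ 1/2 := hsabs.trans (by nlinarith [mul_nonneg hε.le hMpos.le])
  have hT := (abs_le.1 (taylor_xlogx hs2)).2
  have habs3 : |s|^3 ≤ 27*ε^3*M^3 := by
    calc |s|^3 ≤ (3*ε*M)^3 := pow_le_pow_left₀ (abs_nonneg s) hsabs 3
    _ = 27*ε^3*M^3 := by ring
  have hpoly : s + s^2/2 = 2*ε*a + ε^2*b + 2*ε^2*a^2 + 2*ε^3*(a*b) + (ε^4/2)*b^2 := by
    rw [hs]; ring
  linarith

lemma combine_arith {a b c d I C M ε X S : ℝ} (hC : 0 < C) (hM1 : 1 ≤ M) (hε : 0 < ε)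
    (hεM : ε*M ≤ 1/8)
    (haM : |a| ≤ M) (hbM : |b| ≤ M^2) (hcM : -(M^3) ≤ c) (hdnn : 0 ≤ d)
    (hLS : X - S ≤ 4*C*(ε^2*I))
    (hE1 : 2*ε*a + 3*ε^2*b + 2*ε^3*c + (ε^4/2)*d - 108*ε^3*M^3 ≤ X)
    (hE3 : S ≤ 2*ε*a + ε^2*b + 2*ε^2*a^2 + 2*ε^3*(a*b) + (ε^4/2)*b^2 + 108*ε^3*M^3) :
    b - a^2 ≤ 2*C*I + 111*M^4*ε := by
  have hMpos : (0:ℝ) < M := by linarith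
  have hε1 : ε ≤ 1/8 := by nlinarith
  have hε3 : (0:ℝ) < ε^3 := by positivity
  have t1 : 2*ε^3*(a*b) ≤ 2*ε^3*M^3 := by
    have hab : a*b ≤ M^3 := by
      calc a*b ≤ |a| * |b| := by rw [← abs_mul]; exact le_abs_self _
      _ ≤ M*M^2 := mul_le_mul haM hbM (abs_nonneg b) hMpos.le
      _ = M^3 := by ring
    have := mul_le_mul_of_nonneg_left hab (by positivity : (0:ℝ) ≤ 2*ε^3)
    linarith
  have t2 : (ε^4/2)*b^2 ≤ ε^3*M^4 := by
    have hb4 : b^2 ≤ M^4 := by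
      have h2 := abs_le.1 hbM
      nlinarith [mul_nonneg (by linarith : (0:ℝ) ≤ M^2 - b) (by linarith : (0:ℝ) ≤ M^2 + b)]
    have he43 : ε^4/2 ≤ ε^3 := by
      have := mul_le_mul_of_nonneg_left (show ε ≤ 1 by linarith) hε3.le
      nlinarith [hε3]
    have h1 : (ε^4/2)*b^2 ≤ ε^3*b^2 := mul_le_mul_of_nonneg_right he43 (sq_nonneg b)
    have h2 : ε^3*b^2 ≤ ε^3*M^4 := mul_le_mul_of_nonneg_left hb4 hε3.le
    linarith
  have t3 : -(2*ε^3*c) ≤ 2*ε^3*M^3 := by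
    have := mul_le_mul_of_nonneg_left hcM (by positivity : (0:ℝ) ≤ 2*ε^3)
    linarith
  have t4 : (0:ℝ) ≤ (ε^4/2)*d := by positivity
  have t5 : ε^3*M^3 ≤ ε^3*M^4 := by
    have hM34 : M^3 ≤ M^4 := by nlinarith [pow_nonneg hMpos.le 3]
    exact mul_le_mul_of_nonneg_left hM34 hε3.le
  have hmul : (b - a^2) * (2*ε^2) ≤ (2*C*I + 111*M^4*ε) * (2*ε^2) := by
    have t6 : (0:ℝ) ≤ ε^3*M^4 := by positivity
    nlinarith [hLS, hE1, hE3, t1, t2, t3, t4, t5, t6]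
  exact le_of_mul_le_mul_right hmul (by positivity)

/-- Logarithmic Sobolev inequality implies the Poincaré inequality: if
`∫ f² ln f² dν − (∫ f² dν) ln(∫ f² dν) ≤ 4C ∫ ‖∇f‖² dν` for every bounded Fréchet
differentiable `f` with bounded gradient, then for every such `f`,
`∫ f² dν − (∫ f dν)² ≤ 2C ∫ ‖∇f‖² dν`. -/
theorem stmt11
    {H : Type*} [NormedAddCommGroup H] [InnerProductSpace ℝ H] [CompleteSpace H]
    [SecondCountableTopology H] [MeasurableSpace H] [BorelSpace H]
    (ν : Measure H) [IsProbabilityMeasure ν]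
    (C : ℝ) (hC : 0 < C)
    (hLSI : ∀ (f : H → ℝ) (Gf : H → H),
      (∀ x, HasGradientAt f (Gf x) x) →
      (∃ M, ∀ x, |f x| ≤ M) →
      (∃ M, ∀ x, ‖Gf x‖ ≤ M) →
      ∫ x, (f x) ^ 2 * Real.log ((f x) ^ 2) ∂ν
          - (∫ x, (f x) ^ 2 ∂ν) * Real.log (∫ x, (f x) ^ 2 ∂ν)
        ≤ 4 * C * ∫ x, ‖Gf x‖ ^ 2 ∂ν) :
    ∀ (f : H → ℝ) (Gf : H → H),
      (∀ x, HasGradientAt f (Gf x) x) →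
      (∃ M, ∀ x, |f x| ≤ M) →
      (∃ M, ∀ x, ‖Gf x‖ ≤ M) →
      ∫ x, (f x) ^ 2 ∂ν - (∫ x, f x ∂ν) ^ 2 ≤ 2 * C * ∫ x, ‖Gf x‖ ^ 2 ∂ν := by
  intro f Gf hgrad hfb hGb
  obtain ⟨M₀, hM₀⟩ := hfb
  obtain ⟨M', hM'⟩ := hGb
  set M : ℝ := max M₀ 1 with hMdef
  have hM1 : (1:ℝ) ≤ M := le_max_right _ _
  have hMpos : (0:ℝ) < M := by linarith
  have hfM : ∀ x, |f x| ≤ M := fun x => le_trans (hM₀ x) (le_max_left _ _)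
  have hfc : Continuous f := continuous_iff_continuousAt.2 fun x => (hgrad x).continuousAt
  have intb : ∀ (g : H → ℝ), Continuous g → ∀ K : ℝ, (∀ x, |g x| ≤ K) → Integrable g ν :=
    fun g hg K hK => Integrable.mono' (integrable_const K) hg.aestronglyMeasurable
      (ae_of_all _ fun x => by simpa [Real.norm_eq_abs] using hK x)
  have intf : Integrable f ν := intb f hfc M hfM
  have habs_pow : ∀ (n : ℕ) (x : H), |(f x)^n| ≤ M^n := fun n x => by
    rw [abs_pow]; exact pow_le_pow_left₀ (abs_nonneg _) (hfM x) n
  have intf2 : Integrable (fun x => (f x)^2) ν := intb _ (hfc.pow 2) (M^2) (habs_pow 2)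
  have intf3 : Integrable (fun x => (f x)^3) ν := intb _ (hfc.pow 3) (M^3) (habs_pow 3)
  have intf4 : Integrable (fun x => (f x)^4) ν := intb _ (hfc.pow 4) (M^4) (habs_pow 4)
  set a := ∫ x, f x ∂ν with ha
  set b := ∫ x, (f x)^2 ∂ν with hb
  set c := ∫ x, (f x)^3 ∂ν with hc
  set d := ∫ x, (f x)^4 ∂ν with hd
  set I := ∫ x, ‖Gf x‖^2 ∂ν with hI
  have haM : |a| ≤ M := by
    have h0 := norm_integral_le_integral_norm (μ := ν) f
    simp only [Real.norm_eq_abs] at h0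
    calc |a| ≤ ∫ x, |f x| ∂ν := h0
    _ ≤ ∫ _x, M ∂ν := integral_mono intf.abs (integrable_const M) hfM
    _ = M := by simp
  have hbnn : (0:ℝ) ≤ b := integral_nonneg fun x => sq_nonneg _
  have hbM : |b| ≤ M^2 := by
    rw [abs_of_nonneg hbnn]
    calc b ≤ ∫ _x, M^2 ∂ν := integral_mono intf2 (integrable_const _)
          (fun x => by have := habs_pow 2 x; rw [abs_of_nonneg (sq_nonneg _)] at this; exact this)
    _ = M^2 := by simp
  have hcM : -(M^3) ≤ c := by
    have : ∫ _x, -(M^3) ∂ν ≤ c := integral_mono (integrable_const _) intf3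
      (fun x => by
        have h := abs_le.1 (habs_pow 3 x)
        linarith [h.1])
    simpa using this
  have hdnn : (0:ℝ) ≤ d := integral_nonneg fun x => by positivity
  clear_value a b c d I
  -- main per-ε estimate
  have key : ∀ ε : ℝ, 0 < ε → ε * M ≤ 1/8 → b - a^2 ≤ 2*C*I + 111*M^4*ε := by
    intro ε hε hεM
    have hε1 : ε ≤ 1/8 := by nlinarith
    have hu1 : ∀ x, -(1:ℝ)/8 ≤ ε * f x := fun x => by
      have h := abs_le.1 (hfM x)
      nlinarith [mul_le_mul_of_nonneg_left h.1 hε.le]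
    have hu2 : ∀ x, ε * f x ≤ 1/8 := fun x => by
      have h := abs_le.1 (hfM x)
      nlinarith [mul_le_mul_of_nonneg_left h.2 hε.le]
    set s : ℝ := 2*ε*a + ε^2*b with hs
    clear_value s
    have hgε : ∀ x, HasGradientAt (fun y => 1 + ε * f y) (ε • Gf x) x :=
      fun x => grad_affine ε (hgrad x)
    have hLS := hLSI (fun y => 1 + ε * f y) (fun x => ε • Gf x) hgε
      ⟨2, fun x => by
        show |1 + ε * f x| ≤ 2
        rw [abs_le]; constructor
        · linarith [hu1 x]
        · linarith [hu2 x]⟩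
      ⟨ε * M', fun x => by
        show ‖ε • Gf x‖ ≤ ε * M'
        rw [norm_smul, Real.norm_eq_abs, abs_of_pos hε]
        exact mul_le_mul_of_nonneg_left (hM' x) hε.le⟩
    -- RHS rewrite
    have hRHS : ∫ x, ‖ε • Gf x‖^2 ∂ν = ε^2 * I := by
      rw [hI]
      simp_rw [norm_smul, mul_pow, Real.norm_eq_abs, sq_abs]
      exact integral_const_mul _ _
    -- mean of the square
    have i1 : Integrable (fun x => 2*ε*f x) ν := intf.const_mul _
    have i2 : Integrable (fun x => ε^2*(f x)^2) ν := intf2.const_mul _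
    have hint_sq : ∫ x, (1 + ε * f x)^2 ∂ν = 1 + s := by
      calc ∫ x, (1 + ε * f x)^2 ∂ν
          = ∫ x, ((1:ℝ) + (2*ε*f x + ε^2*(f x)^2)) ∂ν := by congr 1; funext x; ring
        _ = ∫ _x, (1:ℝ) ∂ν + ∫ x, (2*ε*f x + ε^2*(f x)^2) ∂ν :=
            integral_add (integrable_const 1) (i1.add i2)
        _ = 1 + s := by
            rw [integral_add i1 i2, integral_const_mul, integral_const_mul]
            simp [hs, ← ha, ← hb]
    -- pointwise lower bound of the entropy integrand
    have hptw : ∀ x, 2*ε*f x + 3*ε^2*(f x)^2 + 2*ε^3*(f x)^3 + (ε^4/2)*(f x)^4 - 108*ε^3*M^3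
        ≤ (1 + ε*f x)^2 * Real.log ((1+ε*f x)^2) := fun x =>
      ptw_lower hM1 hε hεM (hfM x)
    -- integrability of entropy integrand
    have hφc : Continuous (fun x => (1 + ε*f x)^2 * Real.log ((1+ε*f x)^2)) := by
      have hcg : Continuous (fun x => (1 + ε*f x)^2) :=
        (continuous_const.add (continuous_const.mul hfc)).pow 2
      refine continuous_iff_continuousAt.2 fun x => ContinuousAt.mul hcg.continuousAt ?_
      refine (Real.continuousAt_log ?_).comp hcg.continuousAt
      nlinarith [hu1 x, hu2 x, sq_nonneg (ε * f x)]
    have hφbd : ∀ x, |(1 + ε*f x)^2 * Real.log ((1+ε*f x)^2)| ≤ 2 := fun x =>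
      philog_bound (by linarith [hu1 x]) (hu2 x)
    have hφ_int : Integrable (fun x => (1 + ε*f x)^2 * Real.log ((1+ε*f x)^2)) ν :=
      intb _ hφc 2 hφbd
    -- integral of polynomial lower bound
    have i3 : Integrable (fun x => 3*ε^2*(f x)^2) ν := intf2.const_mul _
    have i4 : Integrable (fun x => 2*ε^3*(f x)^3) ν := intf3.const_mul _
    have i5 : Integrable (fun x => (ε^4/2)*(f x)^4) ν := intf4.const_mul _
    have iP1 : Integrable (fun x => 2*ε*f x + 3*ε^2*(f x)^2) ν := i1.add i3
    have iP2 : Integrable (fun x => 2*ε*f x + 3*ε^2*(f x)^2 + 2*ε^3*(f x)^3) ν := iP1.add i4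
    have iP3 : Integrable
        (fun x => 2*ε*f x + 3*ε^2*(f x)^2 + 2*ε^3*(f x)^3 + (ε^4/2)*(f x)^4) ν := iP2.add i5
    have hPint : Integrable
        (fun x => 2*ε*f x + 3*ε^2*(f x)^2 + 2*ε^3*(f x)^3 + (ε^4/2)*(f x)^4 - 108*ε^3*M^3) ν :=
      iP3.sub (integrable_const _)
    have hE1 : 2*ε*a + 3*ε^2*b + 2*ε^3*c + (ε^4/2)*d - 108*ε^3*M^3
        ≤ ∫ x, (1 + ε*f x)^2 * Real.log ((1+ε*f x)^2) ∂ν := by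
      have hmono := integral_mono hPint hφ_int hptw
      have hPval : ∫ x, (2*ε*f x + 3*ε^2*(f x)^2 + 2*ε^3*(f x)^3 + (ε^4/2)*(f x)^4
            - 108*ε^3*M^3) ∂ν
          = 2*ε*a + 3*ε^2*b + 2*ε^3*c + (ε^4/2)*d - 108*ε^3*M^3 := by
        rw [integral_sub iP3 (integrable_const _),
          integral_add iP2 i5, integral_add iP1 i4,
          integral_add i1 i3, integral_const_mul, integral_const_mul, integral_const_mul,
          integral_const_mul, integral_const]
        simp [← ha, ← hb, ← hc, ← hd]
      linarith [hmono, hPval.ge, hPval.le]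
    have hE3 : (1+s) * Real.log (1+s)
        ≤ 2*ε*a + ε^2*b + 2*ε^2*a^2 + 2*ε^3*(a*b) + (ε^4/2)*b^2 + 108*ε^3*M^3 :=
      mean_upper hM1 hε hεM haM hbM hbnn hs
    -- put everything together
    rw [hint_sq, hRHS] at hLS
    exact combine_arith hC hM1 hε hεM haM hbM hcM hdnn hLS hE1 hE3
  -- conclude by letting ε → 0
  refine le_of_forall_pos_le_add fun δ hδ => ?_
  set ε' : ℝ := min (1/(8*M)) (δ/(111*M^4)) with hεdef
  have hεpos : 0 < ε' := lt_min (by positivity) (by positivity)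
  have hεM : ε' * M ≤ 1/8 := by
    have h1 : ε' ≤ 1/(8*M) := min_le_left _ _
    have h3 := mul_le_mul_of_nonneg_right h1 hMpos.le
    have heq : (1/(8*M))*M = 1/8 := by field_simp
    linarith
  have hεδ : 111*M^4*ε' ≤ δ := by
    have h2 : ε' ≤ δ/(111*M^4) := min_le_right _ _
    have h3 := mul_le_mul_of_nonneg_left h2 (by positivity : (0:ℝ) ≤ 111*M^4)
    have heq : 111*M^4 * (δ/(111*M^4)) = δ := by field_simp
    linarith
  linarith [key ε' hεpos hεM]
end

section
/- Let ε > 0, β ≥ 0 and let K : [1, ∞) → (0, ∞) be differentiable and satisfy r K'(r) ≤ K(r) ln K(r) + (ε/2) r² K(r) + 2β K(r) for every r ≥ 1. Then for every v ≥ 1, K(v) ≤ exp( (ε/2) v² + v (ln K(1) + 2β) − 2β ). -/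
open Real

/-- Gronwall-type lemma for the Herbst argument: if `K : [1,∞) → (0,∞)` is
differentiable and satisfies `r K'(r) ≤ K(r) ln K(r) + (ε/2) r² K(r) + 2β K(r)` for all
`r ≥ 1`, then `K(v) ≤ exp((ε/2) v² + v (ln K(1) + 2β) − 2β)` for every `v ≥ 1`. -/
theorem stmt12
    (ε β : ℝ) (hε : 0 < ε) (hβ : 0 ≤ β)
    (K K' : ℝ → ℝ)
    (hK_pos : ∀ r, 1 ≤ r → 0 < K r)
    (hK_deriv : ∀ r, 1 ≤ r → HasDerivWithinAt K (K' r) (Set.Ici 1) r)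
    (hK_ineq : ∀ r, 1 ≤ r →
      r * K' r ≤ K r * Real.log (K r) + (ε / 2) * r ^ 2 * K r + 2 * β * K r) :
    ∀ v, 1 ≤ v →
      K v ≤ Real.exp ((ε / 2) * v ^ 2 + v * (Real.log (K 1) + 2 * β) - 2 * β) := by
  intro v hv
  set F : ℝ → ℝ := fun r => Real.log (K r) / r - ε / 2 * r + 2 * β / r with hF
  set F' : ℝ → ℝ := fun r =>
    (K' r / K r * r - Real.log (K r)) / r ^ 2 - ε / 2 +
      (0 * r - 2 * β * 1) / r ^ 2 with hF'
  have hderiv : ∀ r ∈ Set.Ici (1 : ℝ), HasDerivWithinAt F (F' r) (Set.Ici 1) r := by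
    intro r hr
    have hr1 : (1 : ℝ) ≤ r := hr
    have hr0 : r ≠ 0 := by positivity
    have hKr : K r ≠ 0 := (hK_pos r hr1).ne'
    have h1 : HasDerivWithinAt (fun x => Real.log (K x)) (K' r / K r) (Set.Ici 1) r :=
      (hK_deriv r hr1).log hKr
    have h2 : HasDerivWithinAt (fun x => Real.log (K x) / x)
        ((K' r / K r * r - Real.log (K r) * 1) / r ^ 2) (Set.Ici 1) r :=
      h1.div (hasDerivWithinAt_id r _) hr0
    have h3 : HasDerivWithinAt (fun x : ℝ => ε / 2 * x) (ε / 2) (Set.Ici 1) r := by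
      simpa using (hasDerivWithinAt_id r (Set.Ici (1:ℝ))).const_mul (ε / 2)
    have h4 : HasDerivWithinAt (fun x : ℝ => 2 * β / x)
        ((0 * r - 2 * β * 1) / r ^ 2) (Set.Ici 1) r :=
      (hasDerivWithinAt_const r _ (2 * β)).div (hasDerivWithinAt_id r _) hr0
    have := (h2.sub h3).add h4
    rw [show F' r = (K' r / K r * r - Real.log (K r) * 1) / r ^ 2 - ε / 2 + (0 * r - 2 * β * 1) / r ^ 2 by simp only [hF', mul_one]]
    exact this
  have hanti : AntitoneOn F (Set.Ici 1) := by
    apply antitoneOn_of_hasDerivWithinAt_nonpos (convex_Ici 1)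
    · exact fun r hr => (hderiv r hr).continuousWithinAt
    · intro r hr
      simp only [interior_Ici] at hr ⊢
      exact (hderiv r (show (1:ℝ) ≤ r from le_of_lt hr)).mono Set.Ioi_subset_Ici_self
    · intro r hr
      rw [interior_Ici] at hr
      have hr1 : (1 : ℝ) ≤ r := le_of_lt hr
      have hr0 : (0 : ℝ) < r := lt_of_lt_of_le one_pos hr1
      have hr2 : (0 : ℝ) < r ^ 2 := by positivity
      have hKr : (0 : ℝ) < K r := hK_pos r hr1
      have h := hK_ineq r hr1
      have key : r * K' r / K r ≤ Real.log (K r) + ε / 2 * r ^ 2 + 2 * β := by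
        rw [div_le_iff₀ hKr]; nlinarith [h]
      have hkey2 : K' r / K r * r - Real.log (K r) + (0 * r - 2 * β * 1) ≤ ε / 2 * r ^ 2 := by
        have e : K' r / K r * r = r * K' r / K r := by ring
        rw [e]; linarith [key]
      show F' r ≤ 0
      have expand2 : F' r =
          (K' r / K r * r - Real.log (K r) + (0 * r - 2 * β * 1) - ε / 2 * r ^ 2) / r ^ 2 := by
        simp only [hF']
        field_simp
        ring
      rw [expand2]
      apply div_nonpos_of_nonpos_of_nonneg _ hr2.le
      linarith [hkey2]
  have hFv : F v ≤ F 1 := hanti (Set.mem_Ici.mpr le_rfl) (Set.mem_Ici.mpr hv) hv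
  have hv0 : (0 : ℝ) < v := lt_of_lt_of_le one_pos hv
  have hF1 : F 1 = Real.log (K 1) - ε / 2 + 2 * β := by simp [hF]
  have h1 : Real.log (K v) / v - ε / 2 * v + 2 * β / v ≤
      Real.log (K 1) - ε / 2 + 2 * β := by rw [← hF1]; exact hFv
  have hlog : Real.log (K v) ≤ ε / 2 * v ^ 2 + v * (Real.log (K 1) + 2 * β) - 2 * β := by
    have h1' := mul_le_mul_of_nonneg_right h1 hv0.le
    have e1 : Real.log (K v) / v * v = Real.log (K v) := div_mul_cancel₀ _ hv0.ne'
    have e2 : 2 * β / v * v = 2 * β := div_mul_cancel₀ _ hv0.ne'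
    have hquad : 0 ≤ ε / 2 * (v ^ 2 - v) := by
      have hmm := mul_nonneg hv0.le (sub_nonneg.mpr hv)
      have hsq : (0:ℝ) ≤ v ^ 2 - v := by nlinarith [hmm]
      exact mul_nonneg (by positivity) hsq
    nlinarith [h1', e1, e2, hquad]
  calc K v = Real.exp (Real.log (K v)) := (Real.exp_log (hK_pos v hv)).symm
  _ ≤ _ := Real.exp_le_exp.mpr hlog
end

section
/- (Abstract form of Proposition 5.6 on ε-logarithmic Sobolev inequalities.) Let H be a real separable Hilbert space, ν a Borel probability measure on H and β : (0, ∞) → [0, ∞). Assume that for every ε > 0, every bounded 1-Lipschitz g : H → ℝ and every τ > 0, τ ∫ g e^{τ g} dν − m(τ) ln m(τ) ≤ ε τ² m(τ) + 2β(ε) m(τ), where m(τ) := ∫ e^{τ g} dν. Then every 1-Lipschitz g : H → ℝ with ∫ e^{|g|} dν < ∞ satisfies ∫ e^{α g²} dν < ∞ for every α > 0. -/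
open Real MeasureTheory Filter ENNReal


lemma nonempty_of_prob {H : Type*} [MeasurableSpace H] (ν : Measure H)
    [IsProbabilityMeasure ν] : Nonempty H := by
  by_contra hne
  have : ν Set.univ = 0 := by
    have : (Set.univ : Set H) = ∅ := by
      simp [Set.eq_empty_iff_forall_notMem]; intro x; exact hne ⟨x⟩
    simp [this]
  simp [measure_univ] at this

lemma exp_int {H : Type*} [MeasurableSpace H] {ν : Measure H} [IsProbabilityMeasure ν]
    {g : H → ℝ} (hg : AEStronglyMeasurable g ν) {M : ℝ} (hM : ∀ x, |g x| ≤ M) (t : ℝ) :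
    Integrable (fun x => Real.exp (t * g x)) ν := by
  refine Integrable.mono' (integrable_const (Real.exp (|t| * M)))
    (Real.continuous_exp.comp_aestronglyMeasurable (hg.const_mul t)) ?_
  filter_upwards with x
  rw [Real.norm_eq_abs, abs_of_pos (Real.exp_pos _)]
  apply Real.exp_le_exp.2
  calc t * g x ≤ |t * g x| := le_abs_self _
    _ = |t| * |g x| := abs_mul _ _
    _ ≤ |t| * M := by nlinarith [abs_nonneg t, hM x, abs_nonneg (g x)]

lemma exp_deriv {H : Type*} [MeasurableSpace H] {ν : Measure H} [IsProbabilityMeasure ν]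
    {g : H → ℝ} (hg : AEStronglyMeasurable g ν) {M : ℝ} (hM : ∀ x, |g x| ≤ M) (τ : ℝ) :
    HasDerivAt (fun t => ∫ x, Real.exp (t * g x) ∂ν)
      (∫ x, g x * Real.exp (τ * g x) ∂ν) τ := by
  have : Nonempty H := nonempty_of_prob ν
  have hM0 : 0 ≤ M := le_trans (abs_nonneg _) (hM (Classical.arbitrary H))
  have key := hasDerivAt_integral_of_dominated_loc_of_deriv_le (μ := ν)
    (F := fun t x => Real.exp (t * g x)) (F' := fun t x => g x * Real.exp (t * g x))
    (x₀ := τ) (bound := fun _ => M * Real.exp ((|τ| + 1) * M)) (s := Metric.ball τ 1) (Metric.ball_mem_nhds τ one_pos)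
    ?_ (exp_int hg hM τ) ?_ ?_ (integrable_const _) ?_
  · exact key.2
  · filter_upwards with t
    exact Real.continuous_exp.comp_aestronglyMeasurable (hg.const_mul t)
  · exact hg.mul (Real.continuous_exp.comp_aestronglyMeasurable (hg.const_mul τ))
  · filter_upwards with a
    intro t ht
    rw [Real.norm_eq_abs, abs_mul, abs_of_pos (Real.exp_pos _)]
    have h1 : |g a| ≤ M := hM a
    have h2 : Real.exp (t * g a) ≤ Real.exp ((|τ| + 1) * M) := by
      apply Real.exp_le_exp.2
      have ht' : |t| ≤ |τ| + 1 := by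
        have := Metric.mem_ball.1 ht
        rw [Real.dist_eq] at this
        calc |t| = |τ + (t - τ)| := by ring_nf
          _ ≤ |τ| + |t - τ| := abs_add_le _ _
          _ ≤ |τ| + 1 := by nlinarith [this]
      calc t * g a ≤ |t * g a| := le_abs_self _
        _ = |t| * |g a| := abs_mul _ _
        _ ≤ (|τ| + 1) * M := by nlinarith [abs_nonneg t, abs_nonneg (g a)]
    nlinarith [Real.exp_pos (t * g a), abs_nonneg (g a)]
  · filter_upwards with a
    intro t _
    have h1 : HasDerivAt (fun s : ℝ => s * g a) (g a) t := by
      simpa using (hasDerivAt_id t).mul_const (g a)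
    simpa [mul_comm] using h1.exp

section
variable {H : Type*} [NormedAddCommGroup H] [InnerProductSpace ℝ H] [CompleteSpace H]
    [SecondCountableTopology H] [MeasurableSpace H] [BorelSpace H]
    {ν : Measure H} [IsProbabilityMeasure ν] {β : ℝ → ℝ}

lemma exp_integral_pos {g : H → ℝ} (hg : AEStronglyMeasurable g ν) {M : ℝ}
    (hM : ∀ x, |g x| ≤ M) (t : ℝ) :
    Real.exp (-(|t| * M)) ≤ ∫ x, Real.exp (t * g x) ∂ν := by
  have h1 : ∀ x, Real.exp (-(|t| * M)) ≤ Real.exp (t * g x) := by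
    intro x
    apply Real.exp_le_exp.2
    have := neg_abs_le (t * g x)
    rw [abs_mul] at this
    nlinarith [abs_nonneg t, hM x, abs_nonneg (g x), neg_abs_le (t * g x)]
  calc Real.exp (-(|t| * M)) = ∫ _ : H, Real.exp (-(|t| * M)) ∂ν := by
        simp [measure_univ]
    _ ≤ ∫ x, Real.exp (t * g x) ∂ν :=
        integral_mono (integrable_const _) (exp_int hg hM t) h1

theorem key_bound (hβ : ∀ ε > (0 : ℝ), 0 ≤ β ε)
    (h : ∀ ε > (0 : ℝ), ∀ g : H → ℝ, (∃ M, ∀ x, |g x| ≤ M) → LipschitzWith 1 g →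
      ∀ τ > (0 : ℝ),
        τ * ∫ x, g x * Real.exp (τ * g x) ∂ν
            - (∫ x, Real.exp (τ * g x) ∂ν) * Real.log (∫ x, Real.exp (τ * g x) ∂ν)
          ≤ ε * τ ^ 2 * ∫ x, Real.exp (τ * g x) ∂ν
            + 2 * β ε * ∫ x, Real.exp (τ * g x) ∂ν)
    {g : H → ℝ} {M : ℝ} (hM : ∀ x, |g x| ≤ M) (hgl : LipschitzWith 1 g)
    {ε : ℝ} (hε : 0 < ε) {τ : ℝ} (hτ : 1 ≤ τ) :
    ∫ x, Real.exp (τ * g x) ∂ν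
      ≤ Real.exp (τ * Real.log (∫ x, Real.exp (g x) ∂ν) + ε * τ ^ 2 + 2 * β ε * τ) := by
  have hg : AEStronglyMeasurable g ν := hgl.continuous.aestronglyMeasurable
  set m : ℝ → ℝ := fun t => ∫ x, Real.exp (t * g x) ∂ν with hm_def
  set m' : ℝ → ℝ := fun t => ∫ x, g x * Real.exp (t * g x) ∂ν with hm'_def
  have hm : ∀ t, HasDerivAt m (m' t) t := fun t => exp_deriv hg hM t
  have hmpos : ∀ t, 0 < m t := fun t =>
    lt_of_lt_of_le (Real.exp_pos _) (exp_integral_pos hg hM t)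
  set D : ℝ → ℝ := fun t =>
    (m' t / m t * t - Real.log (m t) * 1) / t ^ 2 - ε + (0 * t - 2 * β ε * 1) / t ^ 2
    with hD_def
  set G : ℝ → ℝ := fun t => Real.log (m t) / t - ε * t + 2 * β ε / t with hG_def
  have hG : ∀ t : ℝ, 0 < t → HasDerivAt G (D t) t := by
    intro t ht0
    have hlog : HasDerivAt (fun t => Real.log (m t)) (m' t / m t) t :=
      (hm t).log (hmpos t).ne'
    have hdiv : HasDerivAt (fun t => Real.log (m t) / t)
        ((m' t / m t * t - Real.log (m t) * 1) / t ^ 2) t :=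
      hlog.div (hasDerivAt_id t) ht0.ne'
    have hlin : HasDerivAt (fun t : ℝ => ε * t) ε t := by
      simpa using (hasDerivAt_id t).const_mul ε
    have hinv : HasDerivAt (fun t : ℝ => 2 * β ε / t)
        ((0 * t - 2 * β ε * 1) / t ^ 2) t :=
      (hasDerivAt_const t (2 * β ε)).div (hasDerivAt_id t) ht0.ne'
    exact (hdiv.sub hlin).add hinv
  have hD : ∀ t : ℝ, 0 < t → D t ≤ 0 := by
    intro t ht0
    have hh := h ε hε g ⟨M, hM⟩ hgl t ht0
    have hmp := hmpos t
    have ht2 : (0 : ℝ) < t ^ 2 := by positivity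
    have h2 : m' t / m t * t - Real.log (m t) ≤ ε * t ^ 2 + 2 * β ε := by
      have he : m' t / m t * t = m' t * t / m t := by ring
      rw [he, sub_le_iff_le_add, div_le_iff₀ hmp]
      nlinarith [hh]
    have h3 : (m' t / m t * t - Real.log (m t)) / t ^ 2 ≤ ε + 2 * β ε / t ^ 2 := by
      rw [div_le_iff₀ ht2]
      have e : 2 * β ε / t ^ 2 * t ^ 2 = 2 * β ε := div_mul_cancel₀ _ ht2.ne'
      nlinarith [h2, e]
    simp only [hD_def]
    have : (0 * t - 2 * β ε * 1) / t ^ 2 = -(2 * β ε / t ^ 2) := by ring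
    rw [this]
    have hb : Real.log (m t) * 1 = Real.log (m t) := mul_one _
    rw [hb]
    linarith [h3]
  have hanti : AntitoneOn G (Set.Ici (1 : ℝ)) := by
    apply antitoneOn_of_deriv_nonpos (convex_Ici 1)
    · intro t ht
      exact ((hG t (lt_of_lt_of_le one_pos ht)).continuousAt).continuousWithinAt
    · rw [interior_Ici]
      intro t ht
      exact ((hG t (lt_trans one_pos ht)).differentiableAt).differentiableWithinAt
    · rw [interior_Ici]
      intro t ht
      have h0 : (0:ℝ) < t := lt_trans one_pos ht
      rw [(hG t h0).deriv]
      exact hD t h0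
  have hGle : G τ ≤ G 1 := hanti Set.self_mem_Ici hτ hτ
  have hτ0 : (0:ℝ) < τ := lt_of_lt_of_le one_pos hτ
  have hβ' := hβ ε hε
  have hG1 : G 1 = Real.log (m 1) - ε + 2 * β ε := by simp [hG_def]
  have hGτ : G τ = Real.log (m τ) / τ - ε * τ + 2 * β ε / τ := rfl
  rw [hG1, hGτ] at hGle
  have e1 : Real.log (m τ) / τ * τ = Real.log (m τ) := div_mul_cancel₀ _ hτ0.ne'
  have e2 : 2 * β ε / τ * τ = 2 * β ε := div_mul_cancel₀ _ hτ0.ne'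
  have hlogle : Real.log (m τ) ≤ τ * Real.log (m 1) + ε * τ ^ 2 + 2 * β ε * τ := by
    nlinarith [mul_le_mul_of_nonneg_right hGle hτ0.le, e1, e2]
  have hm1 : m 1 = ∫ x, Real.exp (g x) ∂ν := by simp [hm_def]
  calc m τ = Real.exp (Real.log (m τ)) := (Real.exp_log (hmpos τ)).symm
    _ ≤ _ := by
        rw [← hm1]
        exact Real.exp_le_exp.2 hlogle

theorem step2 (hβ : ∀ ε > (0 : ℝ), 0 ≤ β ε)
    (h : ∀ ε > (0 : ℝ), ∀ g : H → ℝ, (∃ M, ∀ x, |g x| ≤ M) → LipschitzWith 1 g →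
      ∀ τ > (0 : ℝ),
        τ * ∫ x, g x * Real.exp (τ * g x) ∂ν
            - (∫ x, Real.exp (τ * g x) ∂ν) * Real.log (∫ x, Real.exp (τ * g x) ∂ν)
          ≤ ε * τ ^ 2 * ∫ x, Real.exp (τ * g x) ∂ν
            + 2 * β ε * ∫ x, Real.exp (τ * g x) ∂ν)
    {g : H → ℝ} (hgl : LipschitzWith 1 g)
    (hInt : Integrable (fun x => Real.exp |g x|) ν)
    {ε : ℝ} (hε : 0 < ε) {τ : ℝ} (hτ : 1 ≤ τ) :
    ∫⁻ x, ENNReal.ofReal (Real.exp (τ * g x)) ∂ν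
      ≤ ENNReal.ofReal (Real.exp (τ * Real.log (∫ x, Real.exp |g x| ∂ν)
          + ε * τ ^ 2 + 2 * β ε * τ)) := by
  have hτ0 : (0:ℝ) < τ := lt_of_lt_of_le one_pos hτ
  set E : ℝ := ∫ x, Real.exp |g x| ∂ν with hE_def
  set C : ℝ≥0∞ := ENNReal.ofReal (Real.exp (τ * Real.log E + ε * τ ^ 2 + 2 * β ε * τ)) with hC_def
  set gn : ℕ → H → ℝ := fun n x => max (min (g x) n) (-(n:ℝ)) with hgn_def
  have hgn_lip : ∀ n, LipschitzWith 1 (gn n) := fun n =>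
    ((hgl.min_const _).max_const _)
  have hgn_bd : ∀ n, ∀ x, |gn n x| ≤ (n : ℝ) := by
    intro n x
    rw [abs_le]
    constructor
    · exact le_max_right _ _
    · exact max_le (min_le_right _ _) (by simp)
  have hgn_le : ∀ n x, gn n x ≤ |g x| := by
    intro n x
    apply max_le (le_trans (min_le_left _ _) (le_abs_self _))
    exact le_trans (neg_nonpos.2 (Nat.cast_nonneg n)) (abs_nonneg _)
  have hgn_meas : ∀ n, AEStronglyMeasurable (gn n) ν :=
    fun n => (hgn_lip n).continuous.aestronglyMeasurable
  -- positivity of E and bound on each integral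
  have hEpos : (0:ℝ) < E := by
    have : (1:ℝ) ≤ E := by
      calc (1:ℝ) = ∫ _ : H, (1:ℝ) ∂ν := by simp [measure_univ]
        _ ≤ E := integral_mono (integrable_const _) hInt
              (fun x => by simpa using Real.one_le_exp (abs_nonneg (g x)))
    linarith
  have hbound : ∀ n : ℕ, ∫⁻ x, ENNReal.ofReal (Real.exp (τ * gn n x)) ∂ν ≤ C := by
    intro n
    have hint_n : Integrable (fun x => Real.exp (τ * gn n x)) ν :=
      exp_int (hgn_meas n) (hgn_bd n) τ
    have h1 : ∫ x, Real.exp (τ * gn n x) ∂ν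
        ≤ Real.exp (τ * Real.log (∫ x, Real.exp (gn n x) ∂ν) + ε * τ ^ 2 + 2 * β ε * τ) :=
      key_bound hβ h (hgn_bd n) (hgn_lip n) hε hτ
    have h2 : ∫ x, Real.exp (gn n x) ∂ν ≤ E := by
      apply integral_mono (exp_int (hgn_meas n) (hgn_bd n) 1 |>.congr ?_) hInt
      · exact fun x => Real.exp_le_exp.2 (hgn_le n x)
      · filter_upwards with x; rw [one_mul]
    have h2pos : (0:ℝ) < ∫ x, Real.exp (gn n x) ∂ν := by
      have : ∀ x, Real.exp (-(n:ℝ)) ≤ Real.exp (gn n x) := by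
        intro x
        exact Real.exp_le_exp.2 (neg_le_of_abs_le (hgn_bd n x))
      calc (0:ℝ) < Real.exp (-(n:ℝ)) := Real.exp_pos _
        _ = ∫ _ : H, Real.exp (-(n:ℝ)) ∂ν := by simp [measure_univ]
        _ ≤ _ := integral_mono (integrable_const _)
              ((exp_int (hgn_meas n) (hgn_bd n) 1).congr
                (by filter_upwards with x; rw [one_mul])) this
    have h3 : Real.log (∫ x, Real.exp (gn n x) ∂ν) ≤ Real.log E :=
      Real.log_le_log h2pos h2
    rw [← ofReal_integral_eq_lintegral_ofReal hint_n
      (by filter_upwards with x; positivity)]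
    apply ENNReal.ofReal_le_ofReal
    calc ∫ x, Real.exp (τ * gn n x) ∂ν ≤ _ := h1
      _ ≤ _ := by
          apply Real.exp_le_exp.2
          have := mul_le_mul_of_nonneg_left h3 hτ0.le
          linarith
  -- pointwise convergence and Fatou
  have hpt : ∀ x, (ENNReal.ofReal (Real.exp (τ * g x)))
      = liminf (fun n => ENNReal.ofReal (Real.exp (τ * gn n x))) atTop := by
    intro x
    have hev : ∀ n ≥ ⌈|g x|⌉₊, ENNReal.ofReal (Real.exp (τ * gn n x))
        = ENNReal.ofReal (Real.exp (τ * g x)) := by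
      intro n hn
      have hn' : |g x| ≤ (n : ℝ) := le_trans (Nat.le_ceil _) (by exact_mod_cast hn)
      have : gn n x = g x := by
        rw [hgn_def]
        simp only
        rw [min_eq_left (le_trans (le_abs_self _) hn'),
          max_eq_left (le_trans (neg_le_neg hn') (by simpa using neg_abs_le (g x)))]
      rw [this]
    exact (tendsto_atTop_of_eventually_const hev).liminf_eq.symm
  calc ∫⁻ x, ENNReal.ofReal (Real.exp (τ * g x)) ∂ν
      = ∫⁻ x, liminf (fun n => ENNReal.ofReal (Real.exp (τ * gn n x))) atTop ∂ν := by
        apply lintegral_congr; intro x; exact hpt x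
    _ ≤ liminf (fun n => ∫⁻ x, ENNReal.ofReal (Real.exp (τ * gn n x)) ∂ν) atTop := by
        apply lintegral_liminf_le
        intro n
        exact (ENNReal.measurable_ofReal.comp
          (Real.measurable_exp.comp ((hgn_lip n).continuous.measurable.const_mul τ)))
    _ ≤ liminf (fun _ : ℕ => C) atTop := liminf_le_liminf (Eventually.of_forall hbound)
    _ = C := liminf_const _



theorem stmt13_aux
    (hβ : ∀ ε > (0 : ℝ), 0 ≤ β ε)
    (h : ∀ ε > (0 : ℝ), ∀ g : H → ℝ, (∃ M, ∀ x, |g x| ≤ M) → LipschitzWith 1 g →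
      ∀ τ > (0 : ℝ),
        τ * ∫ x, g x * Real.exp (τ * g x) ∂ν
            - (∫ x, Real.exp (τ * g x) ∂ν) * Real.log (∫ x, Real.exp (τ * g x) ∂ν)
          ≤ ε * τ ^ 2 * ∫ x, Real.exp (τ * g x) ∂ν
            + 2 * β ε * ∫ x, Real.exp (τ * g x) ∂ν) :
    ∀ g : H → ℝ, LipschitzWith 1 g →
      Integrable (fun x => Real.exp |g x|) ν →
      ∀ α > (0 : ℝ), Integrable (fun x => Real.exp (α * (g x) ^ 2)) ν := by
  intro g hgl hInt α hα
  have hg_meas : Measurable g := hgl.continuous.measurable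
  set E : ℝ := ∫ x, Real.exp |g x| ∂ν with hE_def
  have hE1 : (1:ℝ) ≤ E := by
    calc (1:ℝ) = ∫ _ : H, (1:ℝ) ∂ν := by simp [measure_univ]
      _ ≤ E := integral_mono (integrable_const _) hInt
            (fun x => by simpa using Real.one_le_exp (abs_nonneg (g x)))
  set ε : ℝ := 1 / (8 * α) with hε_def
  have hε : 0 < ε := by positivity
  set L : ℝ := Real.log E + 2 * β ε with hL_def
  have hL0 : 0 ≤ L := add_nonneg (Real.log_nonneg hE1) (by linarith [hβ ε hε])
  -- per-k bound on ∫⁻ e^{k |g|}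
  have hk : ∀ k : ℕ, ∫⁻ x, ENNReal.ofReal (Real.exp ((k:ℝ) * |g x|)) ∂ν
      ≤ 2 * ENNReal.ofReal (Real.exp ((k:ℝ) * L + ε * (k:ℝ) ^ 2)) := by
    intro k
    rcases Nat.eq_zero_or_pos k with hk0 | hk1
    · subst hk0
      simp only [Nat.cast_zero, zero_mul, Real.exp_zero, ENNReal.ofReal_one,
        lintegral_const, measure_univ, mul_one, zero_pow, mul_zero, add_zero]
      norm_num
    · have hτ : (1:ℝ) ≤ (k:ℝ) := by exact_mod_cast hk1
      have hb1 := step2 hβ h hgl hInt hε hτ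
      have hIntn : Integrable (fun x => Real.exp |(-(g x))|) ν := by
        apply hInt.congr
        filter_upwards with x
        rw [abs_neg]
      have hb2 := step2 hβ h (hgl.neg) hIntn hε hτ
      simp only [Pi.neg_apply] at hb2
      have hEn : ∫ x, Real.exp |(-(g x))| ∂ν = E := by
        apply integral_congr_ae
        filter_upwards with x
        rw [abs_neg]
      rw [hEn] at hb2
      have hpw : ∀ x, ENNReal.ofReal (Real.exp ((k:ℝ) * |g x|))
          ≤ ENNReal.ofReal (Real.exp ((k:ℝ) * g x))
            + ENNReal.ofReal (Real.exp ((k:ℝ) * (-(g x)))) := by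
        intro x
        rcases abs_choice (g x) with hc | hc
        · rw [hc]
          exact le_add_of_le_of_nonneg le_rfl zero_le
        · rw [hc]
          refine le_add_of_nonneg_of_le zero_le ?_
          apply ENNReal.ofReal_le_ofReal
          apply Real.exp_le_exp.2
          rw [mul_neg]
      have hmeas1 : Measurable fun x => ENNReal.ofReal (Real.exp ((k:ℝ) * g x)) :=
        ENNReal.measurable_ofReal.comp (Real.measurable_exp.comp (hg_meas.const_mul _))
      calc ∫⁻ x, ENNReal.ofReal (Real.exp ((k:ℝ) * |g x|)) ∂ν
          ≤ ∫⁻ x, (ENNReal.ofReal (Real.exp ((k:ℝ) * g x))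
              + ENNReal.ofReal (Real.exp ((k:ℝ) * (-(g x))))) ∂ν :=
            lintegral_mono hpw
        _ = (∫⁻ x, ENNReal.ofReal (Real.exp ((k:ℝ) * g x)) ∂ν)
            + ∫⁻ x, ENNReal.ofReal (Real.exp ((k:ℝ) * (-(g x)))) ∂ν :=
            lintegral_add_left hmeas1 _
        _ ≤ ENNReal.ofReal (Real.exp ((k:ℝ) * Real.log E + ε * (k:ℝ) ^ 2 + 2 * β ε * (k:ℝ)))
            + ENNReal.ofReal (Real.exp ((k:ℝ) * Real.log E + ε * (k:ℝ) ^ 2 + 2 * β ε * (k:ℝ))) :=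
            add_le_add hb1 hb2
        _ = 2 * ENNReal.ofReal (Real.exp ((k:ℝ) * L + ε * (k:ℝ) ^ 2)) := by
            have he : (k:ℝ) * Real.log E + ε * (k:ℝ) ^ 2 + 2 * β ε * (k:ℝ)
                = (k:ℝ) * L + ε * (k:ℝ) ^ 2 := by rw [hL_def]; ring
            rw [he]
            exact (two_mul _).symm
  -- pointwise quadratic bound
  set c : ℕ → ℝ := fun k => Real.exp (1/(4*α) - (k:ℝ)^2/(4*α)) with hc_def
  have hptq : ∀ x, ENNReal.ofReal (Real.exp (α * (g x) ^ 2))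
      ≤ ∑' k : ℕ, ENNReal.ofReal (c k * Real.exp ((k:ℝ) * |g x|)) := by
    intro x
    set t : ℝ := |g x| with ht_def
    have ht0 : 0 ≤ t := abs_nonneg _
    set k0 : ℕ := ⌈2*α*t⌉₊ with hk0_def
    have hk1 : 2*α*t ≤ (k0:ℝ) := Nat.le_ceil _
    have hk2 : (k0:ℝ) < 2*α*t + 1 := Nat.ceil_lt_add_one (by positivity)
    have hδ0 : 0 ≤ (k0:ℝ) - 2*α*t := by linarith
    have hδ1 : (k0:ℝ) - 2*α*t ≤ 1 := by linarith
    have key' : 4*α*(α*t^2) ≤ 1 - (k0:ℝ)^2 + 4*α*((k0:ℝ)*t) := by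
      nlinarith [mul_le_mul_of_nonneg_left hδ1 hδ0]
    have h4 : (0:ℝ) < 4*α := by linarith
    have key : α * t^2 ≤ 1/(4*α) - (k0:ℝ)^2/(4*α) + (k0:ℝ)*t := by
      rw [← mul_le_mul_iff_right₀ h4]
      have e1 : 4*α*(1/(4*α) - (k0:ℝ)^2/(4*α) + (k0:ℝ)*t)
          = 1 - (k0:ℝ)^2 + 4*α*((k0:ℝ)*t) := by
        field_simp
      rw [e1]
      exact key'
    have hterm : Real.exp (α * (g x)^2) ≤ c k0 * Real.exp ((k0:ℝ) * t) := by
      rw [hc_def]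
      simp only
      rw [← Real.exp_add]
      apply Real.exp_le_exp.2
      calc α * (g x)^2 = α * t^2 := by rw [ht_def, sq_abs]
        _ ≤ 1/(4*α) - (k0:ℝ)^2/(4*α) + (k0:ℝ)*t := key
        _ = 1/(4*α) - (k0:ℝ)^2/(4*α) + (k0:ℝ)*t := rfl
    calc ENNReal.ofReal (Real.exp (α * (g x)^2))
        ≤ ENNReal.ofReal (c k0 * Real.exp ((k0:ℝ) * t)) := ENNReal.ofReal_le_ofReal hterm
      _ ≤ _ := ENNReal.le_tsum k0
  -- summable tail
  set K : ℝ := Real.exp (1/(4*α) + 2*α*(L+1)^2) with hK_def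
  set r : ℝ≥0∞ := ENNReal.ofReal (Real.exp (-1)) with hr_def
  have hterm_le : ∀ k : ℕ,
      ENNReal.ofReal (c k) * (2 * ENNReal.ofReal (Real.exp ((k:ℝ) * L + ε * (k:ℝ) ^ 2)))
        ≤ ENNReal.ofReal (2*K) * r ^ k := by
    intro k
    have h8 : (0:ℝ) < 8*α := by linarith
    have hexp : c k * Real.exp ((k:ℝ) * L + ε * (k:ℝ) ^ 2)
        = Real.exp (1/(4*α) + (k:ℝ)*L - (k:ℝ)^2/(8*α)) := by
      rw [hc_def]
      simp only
      rw [← Real.exp_add]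
      congr 1
      rw [hε_def]
      field_simp
      ring
    have hquad : (k:ℝ)*L - (k:ℝ)^2/(8*α) ≤ 2*α*(L+1)^2 - (k:ℝ) := by
      have h9 : (k:ℝ)^2/(8*α)*(8*α) = (k:ℝ)^2 := div_mul_cancel₀ _ h8.ne'
      have hs : (k:ℝ)*L + (k:ℝ) - 2*α*(L+1)^2 ≤ (k:ℝ)^2/(8*α) := by
        rw [le_div_iff₀ h8]
        nlinarith [sq_nonneg ((k:ℝ) - 4*α*(L+1))]
      linarith
    have hpow : Real.exp (-1)^k = Real.exp (-(k:ℝ)) := by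
      rw [← Real.exp_nat_mul]
      congr 1
      ring
    have hle : c k * Real.exp ((k:ℝ) * L + ε * (k:ℝ) ^ 2) ≤ K * Real.exp (-1)^k := by
      rw [hexp, hK_def, hpow, ← Real.exp_add]
      apply Real.exp_le_exp.2
      linarith [hquad]
    calc ENNReal.ofReal (c k) * (2 * ENNReal.ofReal (Real.exp ((k:ℝ) * L + ε * (k:ℝ) ^ 2)))
        = ENNReal.ofReal (2 * (c k * Real.exp ((k:ℝ) * L + ε * (k:ℝ) ^ 2))) := by
          rw [ENNReal.ofReal_mul (by norm_num), ENNReal.ofReal_mul (by positivity),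
            ENNReal.ofReal_ofNat]
          ring
      _ ≤ ENNReal.ofReal (2*K * Real.exp (-1)^k) := by
          apply ENNReal.ofReal_le_ofReal
          linarith [hle]
      _ = ENNReal.ofReal (2*K) * r ^ k := by
          rw [ENNReal.ofReal_mul (by positivity), ENNReal.ofReal_pow (Real.exp_pos _).le]
  -- assemble
  have hmeas_k : ∀ k : ℕ, Measurable fun x => ENNReal.ofReal (c k * Real.exp ((k:ℝ) * |g x|)) := by
    intro k
    exact ENNReal.measurable_ofReal.comp
      ((Real.measurable_exp.comp (hg_meas.abs.const_mul _)).const_mul _)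
  have hfin : ∫⁻ x, ENNReal.ofReal (Real.exp (α * (g x) ^ 2)) ∂ν < ⊤ := by
    have hr1 : r < 1 := by
      rw [hr_def]
      apply ENNReal.ofReal_lt_one.2
      exact Real.exp_lt_one_iff.2 (by norm_num)
    calc ∫⁻ x, ENNReal.ofReal (Real.exp (α * (g x) ^ 2)) ∂ν
        ≤ ∫⁻ x, ∑' k : ℕ, ENNReal.ofReal (c k * Real.exp ((k:ℝ) * |g x|)) ∂ν :=
          lintegral_mono hptq
      _ = ∑' k : ℕ, ∫⁻ x, ENNReal.ofReal (c k * Real.exp ((k:ℝ) * |g x|)) ∂ν :=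
          lintegral_tsum (fun k => (hmeas_k k).aemeasurable)
      _ = ∑' k : ℕ, ENNReal.ofReal (c k) * ∫⁻ x, ENNReal.ofReal (Real.exp ((k:ℝ) * |g x|)) ∂ν := by
          congr 1
          funext k
          rw [← lintegral_const_mul' _ _ ENNReal.ofReal_ne_top]
          congr 1
          funext x
          rw [← ENNReal.ofReal_mul (by positivity)]
      _ ≤ ∑' k : ℕ, ENNReal.ofReal (2*K) * r ^ k := by
          apply ENNReal.tsum_le_tsum
          intro k
          exact le_trans (mul_le_mul_right (hk k) _) (hterm_le k)
      _ = ENNReal.ofReal (2*K) * (1 - r)⁻¹ := by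
          rw [ENNReal.tsum_mul_left, ENNReal.tsum_geometric]
      _ < ⊤ := by
          apply ENNReal.mul_lt_top ENNReal.ofReal_lt_top
          rw [ENNReal.inv_lt_top]
          rw [pos_iff_ne_zero]
          intro hcon
          rw [tsub_eq_zero_iff_le] at hcon
          exact absurd hcon (not_le.2 hr1)
  refine ⟨?_, ?_⟩
  · exact (Real.continuous_exp.comp ((continuous_const.mul
      ((hgl.continuous).pow 2)))).aestronglyMeasurable
  · rw [hasFiniteIntegral_iff_ofReal (Eventually.of_forall fun x => (Real.exp_pos _).le)]
    exact hfin

end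

/-- ε-logarithmic Sobolev inequalities imply exponential integrability of all orders:
if for every `ε > 0`, every bounded 1-Lipschitz `g` and every `τ > 0`,
`τ ∫ g e^{τg} dν − m(τ) ln m(τ) ≤ ε τ² m(τ) + 2β(ε) m(τ)` where `m(τ) = ∫ e^{τg} dν`,
then every 1-Lipschitz `g` with `∫ e^{|g|} dν < ∞` satisfies `∫ e^{α g²} dν < ∞`
for every `α > 0`. -/
theorem stmt13
    {H : Type*} [NormedAddCommGroup H] [InnerProductSpace ℝ H] [CompleteSpace H]
    [SecondCountableTopology H] [MeasurableSpace H] [BorelSpace H]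
    (ν : Measure H) [IsProbabilityMeasure ν]
    (β : ℝ → ℝ) (hβ : ∀ ε > (0 : ℝ), 0 ≤ β ε)
    (h : ∀ ε > (0 : ℝ), ∀ g : H → ℝ, (∃ M, ∀ x, |g x| ≤ M) → LipschitzWith 1 g →
      ∀ τ > (0 : ℝ),
        τ * ∫ x, g x * Real.exp (τ * g x) ∂ν
            - (∫ x, Real.exp (τ * g x) ∂ν) * Real.log (∫ x, Real.exp (τ * g x) ∂ν)
          ≤ ε * τ ^ 2 * ∫ x, Real.exp (τ * g x) ∂ν
            + 2 * β ε * ∫ x, Real.exp (τ * g x) ∂ν) :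
    ∀ g : H → ℝ, LipschitzWith 1 g →
      Integrable (fun x => Real.exp |g x|) ν →
      ∀ α > (0 : ℝ), Integrable (fun x => Real.exp (α * (g x) ^ 2)) ν := by
  exact stmt13_aux hβ h
end

section
/- Let a > 0, let f : (0, ∞) → [0, ∞) be differentiable with lim_{s → ∞} f(s) = +∞, and let φ : (0, ∞) → [0, ∞) be a continuous strictly increasing function with lim_{s → ∞} φ(s)/s = +∞. Assume that f'(r) ≥ − a/(2r) + φ(r)/(2r) for every r > 0. Then lim_{s → ∞} f(s)/s = +∞. -/
open Real Filter

/-- If `f : (0,∞) → [0,∞)` is differentiable with `f(s) → ∞`, `φ : (0,∞) → [0,∞)` is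
continuous, strictly increasing and superlinear, and `f'(r) ≥ −a/(2r) + φ(r)/(2r)` for
all `r > 0`, then `f(s)/s → ∞` as `s → ∞`. -/
theorem stmt15
    (a : ℝ) (ha : 0 < a)
    (f f' φ : ℝ → ℝ)
    (hf_nonneg : ∀ s > (0 : ℝ), 0 ≤ f s)
    (hf_deriv : ∀ r > (0 : ℝ), HasDerivAt f (f' r) r)
    (hf_lim : Tendsto f atTop atTop)
    (hφ_nonneg : ∀ s > (0 : ℝ), 0 ≤ φ s)
    (hφ_cont : ContinuousOn φ (Set.Ioi 0))
    (hφ_mono : StrictMonoOn φ (Set.Ioi 0))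
    (hφ_superlin : Tendsto (fun s => φ s / s) atTop atTop)
    (hineq : ∀ r > (0 : ℝ), -a / (2 * r) + φ r / (2 * r) ≤ f' r) :
    Tendsto (fun s => f s / s) atTop atTop := by
  rw [tendsto_atTop]
  intro b
  set M : ℝ := max (b + 1) 1 with hMdef
  have hM1 : (1 : ℝ) ≤ M := le_max_right _ _
  have hMb : b + 1 ≤ M := le_max_left _ _
  have hMpos : 0 < M := lt_of_lt_of_le one_pos hM1
  -- the lower bound for f' tends to ∞
  have h2r : Tendsto (fun r : ℝ => 2 * r) atTop atTop :=
    tendsto_id.const_mul_atTop two_pos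
  have h1 : Tendsto (fun r : ℝ => -a / (2 * r)) atTop (nhds 0) :=
    Tendsto.div_atTop tendsto_const_nhds h2r
  have h2 : Tendsto (fun r => φ r / (2 * r)) atTop atTop := by
    have heq : (fun r => φ r / (2 * r)) = fun r => (φ r / r) / 2 := by
      funext r; rw [div_div]; ring_nf
    rw [heq]
    exact hφ_superlin.atTop_div_const two_pos
  have hlim : Tendsto (fun r => -a / (2 * r) + φ r / (2 * r)) atTop atTop :=
    h1.add_atTop h2
  obtain ⟨R, hR⟩ := eventually_atTop.mp (tendsto_atTop.mp hlim M)
  set R0 : ℝ := max R 1 with hR0def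
  have hR0pos : 0 < R0 := lt_of_lt_of_le one_pos (le_max_right _ _)
  -- g = f - M * id is monotone on [R0, ∞)
  set g : ℝ → ℝ := fun x => f x - M * x with hgdef
  have hg : ∀ x > (0:ℝ), HasDerivAt g (f' x - M) x := by
    intro x hx
    have hMx : HasDerivAt (fun x : ℝ => M * x) M x := by
      simpa using (hasDerivAt_id x).const_mul M
    exact (hf_deriv x hx).sub hMx
  have hmono : MonotoneOn g (Set.Ici R0) := by
    apply monotoneOn_of_deriv_nonneg (convex_Ici R0)
    · intro x hx
      have hx0 : 0 < x := lt_of_lt_of_le hR0pos hx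
      exact ((hg x hx0).continuousAt).continuousWithinAt
    · intro x hx
      rw [interior_Ici] at hx
      have hx0 : 0 < x := lt_trans hR0pos hx
      exact (hg x hx0).differentiableAt.differentiableWithinAt
    · intro x hx
      rw [interior_Ici] at hx
      have hx0 : 0 < x := lt_trans hR0pos hx
      rw [(hg x hx0).deriv]
      have hxR : R ≤ x := le_trans (le_max_left _ _) (le_of_lt hx)
      have := le_trans (hR x hxR) (hineq x hx0)
      linarith
  -- conclude
  filter_upwards [eventually_ge_atTop (max R0 (M * R0))] with s hs
  have hsR0 : R0 ≤ s := le_trans (le_max_left _ _) hs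
  have hsMR0 : M * R0 ≤ s := le_trans (le_max_right _ _) hs
  have hspos : 0 < s := lt_of_lt_of_le hR0pos hsR0
  have hgle : g R0 ≤ g s := hmono (Set.self_mem_Ici) hsR0 hsR0
  have hfR0 : 0 ≤ f R0 := hf_nonneg R0 hR0pos
  have hfs : M * s - M * R0 ≤ f s := by
    simp only [hgdef] at hgle
    linarith
  have key : (M * s - M * R0) / s ≤ f s / s := (div_le_div_iff_of_pos_right hspos).mpr hfs
  have keq : (M * s - M * R0) / s = M - M * R0 / s := by
    field_simp
  have h1' : M * R0 / s ≤ 1 := by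
    rw [div_le_one hspos]; exact hsMR0
  rw [keq] at key
  linarith
end

section
/- (Extension of Gaussian tail bounds from bounded to unbounded Lipschitz functions.) Let H be a real separable Hilbert space, ν a Borel probability measure on H and K > 0. Assume that every bounded 1-Lipschitz h : H → ℝ satisfies ν({ x ∈ H : h(x) ≥ m_ν(h) + t }) ≤ exp( − t² / K ) for every t > 0. Then every 1-Lipschitz g : H → ℝ belongs to L^p(H, ν) for every p ≥ 1 and satisfies ν({ x ∈ H : g(x) ≥ m_ν(g) + t }) ≤ exp( − t² / K ) for every t > 0. -/
open Real MeasureTheory Set Filter Topology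
open scoped ENNReal
noncomputable def stmt17_clamp (g : α → ℝ) (n : ℕ) (x : α) : ℝ := max (-(n:ℝ)) (min (g x) (n:ℝ))

lemma stmt17_clamp_lip {α : Type*} [PseudoMetricSpace α] {g : α → ℝ} (hg : LipschitzWith 1 g)
    (n : ℕ) : LipschitzWith 1 (stmt17_clamp g n) :=
  (hg.min_const _).const_max _

lemma stmt17_clamp_bdd {α : Type*} (g : α → ℝ) (n : ℕ) (x : α) : |stmt17_clamp g n x| ≤ n := by
  rw [abs_le]
  exact ⟨le_max_left _ _, max_le (neg_le_self n.cast_nonneg) (min_le_right _ _)⟩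

lemma stmt17_clamp_abs_le {α : Type*} (g : α → ℝ) (n : ℕ) (x : α) :
    |stmt17_clamp g n x| ≤ |g x| := by
  unfold stmt17_clamp
  rcases le_or_gt 0 (g x) with h0 | h0
  · have h1 : 0 ≤ min (g x) (n:ℝ) := le_min h0 n.cast_nonneg
    rw [max_eq_right (le_trans (neg_nonpos.2 n.cast_nonneg) h1), abs_of_nonneg h1,
      abs_of_nonneg h0]
    exact min_le_left _ _
  · have h1 : min (g x) (n:ℝ) = g x := min_eq_left (h0.le.trans n.cast_nonneg)
    rw [h1, abs_of_neg h0]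
    rcases le_or_gt (-(n:ℝ)) (g x) with h2 | h2
    · rw [max_eq_right h2, abs_of_neg h0]
    · rw [max_eq_left h2.le, abs_of_nonpos (neg_nonpos.2 n.cast_nonneg)]
      linarith

lemma stmt17_clamp_eq {α : Type*} {g : α → ℝ} {n : ℕ} {x : α} (h : |g x| ≤ n) :
    stmt17_clamp g n x = g x := by
  rw [abs_le] at h
  unfold stmt17_clamp
  rw [min_eq_left h.2, max_eq_right h.1]

lemma stmt17_clamp_tendsto {α : Type*} (g : α → ℝ) (x : α) :
    Tendsto (fun n : ℕ => stmt17_clamp g n x) atTop (𝓝 (g x)) := by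
  refine Tendsto.congr' ?_ tendsto_const_nhds
  obtain ⟨N, hN⟩ := exists_nat_ge |g x|
  filter_upwards [eventually_ge_atTop N] with n hn
  exact (stmt17_clamp_eq (hN.trans (Nat.cast_le.2 hn))).symm

lemma stmt17_clamp_ge_min {α : Type*} (g : α → ℝ) (n : ℕ) (x : α) :
    min (g x) (n:ℝ) ≤ stmt17_clamp g n x := le_max_right _ _


lemma stmt17_int_abs {b s : ℝ} (hb : 0 < b) (hs : -1 < s) :
    Integrable (fun x : ℝ => |x| ^ s * Real.exp (-b * x ^ 2)) := by
  have h0 : IntegrableOn (fun x : ℝ => x ^ s * Real.exp (-b * x ^ 2)) (Ioi 0) :=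
    integrableOn_rpow_mul_exp_neg_mul_sq hb hs
  have h1 : IntegrableOn (fun x : ℝ => |x| ^ s * Real.exp (-b * x ^ 2)) (Ioi 0) :=
    h0.congr_fun (fun x hx => by rw [abs_of_pos hx]) measurableSet_Ioi
  rw [← integrableOn_univ, ← Iio_union_Ici (a := (0:ℝ)), integrableOn_union]
  constructor
  · rw [← (Measure.measurePreserving_neg (volume : Measure ℝ)).integrableOn_comp_preimage
        (Homeomorph.neg ℝ).measurableEmbedding]
    simp only [Function.comp_def, abs_neg, neg_sq, neg_preimage, neg_Iio, neg_neg, neg_zero]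
    exact h1
  · rw [integrableOn_Ici_iff_integrableOn_Ioi]
    exact h1

lemma stmt17_memLp {H : Type*} [MeasurableSpace H] (ν : Measure H) [IsProbabilityMeasure ν]
    (K : ℝ) (hK : 0 < K) {g : H → ℝ} (hgm : Measurable g) (C : ℝ) (hC : 0 ≤ C)
    (htail : ∀ t > (0:ℝ), ν {x | C + t ≤ |g x|} ≤ ENNReal.ofReal (2 * Real.exp (-(t^2)/K)))
    (p : ℝ) (hp : 1 ≤ p) : MemLp g (ENNReal.ofReal p) ν := by
  have hp0 : 0 < p := lt_of_lt_of_le one_pos hp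
  refine ⟨hgm.aestronglyMeasurable, ?_⟩
  rw [eLpNorm_eq_lintegral_rpow_enorm_toReal (ENNReal.ofReal_pos.2 hp0).ne' ENNReal.ofReal_ne_top,
    ENNReal.toReal_ofReal hp0.le]
  refine ENNReal.rpow_lt_top_of_nonneg (by positivity) ?_
  have hrw : ∀ x : H, (‖g x‖ₑ) ^ p = ENNReal.ofReal (|g x| ^ p) := fun x => by
    rw [← ofReal_norm, Real.norm_eq_abs,
      ENNReal.ofReal_rpow_of_nonneg (abs_nonneg _) hp0.le]
  simp_rw [hrw]
  rw [lintegral_rpow_eq_lintegral_meas_le_mul ν (ae_of_all _ fun x => abs_nonneg (g x))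
    hgm.abs.aemeasurable hp0]
  refine ENNReal.mul_ne_top ENNReal.ofReal_ne_top ?_
  have hsplit : Ioi (0:ℝ) = Ioc 0 (C+1) ∪ Ioi (C+1) := (Ioc_union_Ioi_eq_Ioi (by linarith)).symm
  rw [hsplit, lintegral_union measurableSet_Ioi Ioc_disjoint_Ioi_same]
  refine ENNReal.add_ne_top.2 ⟨?_, ?_⟩
  · -- bounded part
    have hb : ∀ t ∈ Ioc (0:ℝ) (C+1), ν {a | t ≤ |g a|} * ENNReal.ofReal (t^(p-1)) ≤
        ENNReal.ofReal ((C+1)^(p-1)) := by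
      intro t htt
      calc ν {a | t ≤ |g a|} * ENNReal.ofReal (t^(p-1))
          ≤ 1 * ENNReal.ofReal (t^(p-1)) := mul_le_mul' prob_le_one le_rfl
        _ = ENNReal.ofReal (t^(p-1)) := one_mul _
        _ ≤ ENNReal.ofReal ((C+1)^(p-1)) :=
            ENNReal.ofReal_le_ofReal (Real.rpow_le_rpow htt.1.le htt.2 (by linarith))
    refine ne_of_lt (lt_of_le_of_lt (setLIntegral_mono' measurableSet_Ioc hb) ?_)
    rw [setLIntegral_const]
    exact ENNReal.mul_lt_top ENNReal.ofReal_lt_top (by simp [Real.volume_Ioc])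
  · -- tail part
    set φ : ℝ → ℝ := fun s => 2*(C+1)^(p-1) * (|s - C| ^ (p-1) * Real.exp (-(1/K) * (s-C)^2))
      with hφ
    have hφint : Integrable φ volume := by
      have h0 : Integrable (fun s : ℝ => |s| ^ (p-1) * Real.exp (-(1/K) * s^2)) volume :=
        stmt17_int_abs (by positivity) (by linarith)
      exact (h0.comp_sub_right C).const_mul _
    have hb : ∀ t ∈ Ioi (C+1), ν {a | t ≤ |g a|} * ENNReal.ofReal (t^(p-1)) ≤
        ENNReal.ofReal (φ t) := by
      intro t htt
      simp only [mem_Ioi] at htt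
      have htc : 0 < t - C := by linarith
      have ht0 : 0 < t := by linarith
      have h1 : ν {a | t ≤ |g a|} ≤ ENNReal.ofReal (2 * Real.exp (-((t-C)^2)/K)) := by
        have h2 := htail (t - C) htc
        simpa only [show C + (t - C) = t from by ring] using h2
      calc ν {a | t ≤ |g a|} * ENNReal.ofReal (t^(p-1))
          ≤ ENNReal.ofReal (2 * Real.exp (-((t-C)^2)/K)) * ENNReal.ofReal (t^(p-1)) :=
            mul_le_mul' h1 le_rfl
        _ = ENNReal.ofReal (2 * Real.exp (-((t-C)^2)/K) * t^(p-1)) :=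
            (ENNReal.ofReal_mul (by positivity)).symm
        _ ≤ ENNReal.ofReal (φ t) := by
            refine ENNReal.ofReal_le_ofReal ?_
            have hexp : -((t-C)^2)/K = -(1/K)*(t-C)^2 := by ring
            have habs : |t - C| = t - C := abs_of_pos htc
            rw [hφ]
            simp only []
            rw [habs, ← hexp]
            have ht1 : t ≤ (C+1) * (t - C) := by nlinarith
            have h2 : t^(p-1) ≤ ((C+1)*(t-C))^(p-1) :=
              Real.rpow_le_rpow ht0.le ht1 (by linarith)
            rw [Real.mul_rpow (by linarith) htc.le] at h2
            calc 2 * Real.exp (-((t-C)^2)/K) * t^(p-1)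
                ≤ 2 * Real.exp (-((t-C)^2)/K) * ((C+1)^(p-1) * (t-C)^(p-1)) := by
                  exact mul_le_mul_of_nonneg_left h2 (by positivity)
              _ = 2*(C+1)^(p-1) * ((t-C)^(p-1) * Real.exp (-((t-C)^2)/K)) := by ring
    refine ne_of_lt (lt_of_le_of_lt (setLIntegral_mono' measurableSet_Ioi hb) ?_)
    calc ∫⁻ t in Ioi (C+1), ENNReal.ofReal (φ t) ∂volume
        ≤ ∫⁻ t, ENNReal.ofReal (φ t) ∂volume := setLIntegral_le_lintegral _ _
      _ ≤ ∫⁻ t, ‖φ t‖₊ ∂volume := lintegral_ofReal_le_lintegral_enorm φ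
      _ < ⊤ := hφint.2

section Aux
variable {H : Type*} [MeasurableSpace H] [PseudoMetricSpace H] [BorelSpace H]
  (ν : MeasureTheory.Measure H) [IsProbabilityMeasure ν] (K : ℝ)

-- integrability of clamp
lemma stmt17_clamp_integrable {g : H → ℝ} (hg : LipschitzWith 1 g) (n : ℕ) :
    Integrable (stmt17_clamp g n) ν :=
  ⟨((stmt17_clamp_lip hg n).continuous).aestronglyMeasurable,
    HasFiniteIntegral.of_bounded (C := (n:ℝ)) (ae_of_all _ fun x => by
      simpa [Real.norm_eq_abs] using stmt17_clamp_bdd g n x)⟩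

-- lower tail for bounded lipschitz, from the hypothesis
lemma stmt17_down (hK : 0 < K)
    (h : ∀ h : H → ℝ, (∃ M, ∀ x, |h x| ≤ M) → LipschitzWith 1 h →
      ∀ t > (0 : ℝ),
        ν {x | (∫ y, h y ∂ν) + t ≤ h x} ≤ ENNReal.ofReal (Real.exp (-(t ^ 2) / K)))
    (f : H → ℝ) (hbd : ∃ M, ∀ x, |f x| ≤ M) (hlip : LipschitzWith 1 f) :
    ∀ t > (0:ℝ), ν {x | f x ≤ (∫ y, f y ∂ν) - t} ≤ ENNReal.ofReal (Real.exp (-(t ^ 2) / K)) := by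
  intro t ht
  obtain ⟨M, hM⟩ := hbd
  have hneg : LipschitzWith 1 (fun x => -(f x)) := hlip.neg
  have key := h (fun x => -(f x)) ⟨M, fun x => by simpa [abs_neg] using hM x⟩ hneg t ht
  have hi : (∫ y, -(f y) ∂ν) = -(∫ y, f y ∂ν) := integral_neg _
  rw [hi] at key
  convert key using 2
  ext x
  simp only [Set.mem_setOf_eq]
  constructor <;> intro hx <;> linarith

lemma stmt17_one_sided (hK : 0 < K)
    (h : ∀ h : H → ℝ, (∃ M, ∀ x, |h x| ≤ M) → LipschitzWith 1 h →
      ∀ t > (0 : ℝ),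
        ν {x | (∫ y, h y ∂ν) + t ≤ h x} ≤ ENNReal.ofReal (Real.exp (-(t ^ 2) / K)))
    (g : H → ℝ) (hg : LipschitzWith 1 g) :
    ∃ C : ℝ, 0 ≤ C ∧ ∀ t > (0:ℝ),
      ν {x | C + t ≤ g x} ≤ ENNReal.ofReal (Real.exp (-(t ^ 2) / K)) := by
  have hgm : Measurable g := hg.continuous.measurable
  set mN : ℕ → ℝ := fun n => ∫ y, stmt17_clamp g n y ∂ν with hmN
  -- upper and lower tail bounds for the clamps
  have up : ∀ n : ℕ, ∀ t > (0:ℝ),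
      ν {x | mN n + t ≤ stmt17_clamp g n x} ≤ ENNReal.ofReal (Real.exp (-(t ^ 2) / K)) :=
    fun n => h (stmt17_clamp g n) ⟨n, stmt17_clamp_bdd g n⟩ (stmt17_clamp_lip hg n)
  have down : ∀ n : ℕ, ∀ t > (0:ℝ),
      ν {x | stmt17_clamp g n x ≤ mN n - t} ≤ ENNReal.ofReal (Real.exp (-(t ^ 2) / K)) :=
    fun n => stmt17_down ν K hK h (stmt17_clamp g n) ⟨n, stmt17_clamp_bdd g n⟩
      (stmt17_clamp_lip hg n)
  -- choose a with ν {a < g} < 1/4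
  have hA : ∀ᶠ n : ℕ in atTop, ν {x | (n:ℝ) < g x} < 1/4 := by
    have hmono : Antitone (fun n : ℕ => {x | (n:ℝ) < g x}) := fun m n hmn x hx => by
      simp only [Set.mem_setOf_eq] at hx ⊢
      exact lt_of_le_of_lt (Nat.cast_le.2 hmn) hx
    have hint : ⋂ n : ℕ, {x | (n:ℝ) < g x} = ∅ := by
      ext x
      simp only [Set.mem_iInter, Set.mem_setOf_eq, Set.mem_empty_iff_false, iff_false, not_forall,
        not_lt]
      obtain ⟨n, hn⟩ := exists_nat_ge (g x)
      exact ⟨n, hn⟩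
    have htt := tendsto_measure_iInter_atTop
      (fun n => (measurableSet_lt measurable_const hgm).nullMeasurableSet) hmono
      ⟨0, measure_ne_top ν _⟩
    rw [hint, measure_empty] at htt
    exact htt.eventually_lt_const (by norm_num)
  have hB : ∀ᶠ n : ℕ in atTop, ν {x | g x < -(n:ℝ)} < 1/4 := by
    have hmono : Antitone (fun n : ℕ => {x | g x < -(n:ℝ)}) := fun m n hmn x hx => by
      simp only [Set.mem_setOf_eq] at hx ⊢
      exact lt_of_lt_of_le hx (neg_le_neg (Nat.cast_le.2 hmn))
    have hint : ⋂ n : ℕ, {x | g x < -(n:ℝ)} = ∅ := by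
      ext x
      simp only [Set.mem_iInter, Set.mem_setOf_eq, Set.mem_empty_iff_false, iff_false, not_forall,
        not_lt]
      obtain ⟨n, hn⟩ := exists_nat_ge (-(g x))
      exact ⟨n, by linarith⟩
    have htt := tendsto_measure_iInter_atTop
      (fun n => (measurableSet_lt hgm measurable_const).nullMeasurableSet) hmono
      ⟨0, measure_ne_top ν _⟩
    rw [hint, measure_empty] at htt
    exact htt.eventually_lt_const (by norm_num)
  obtain ⟨a, ha, hb⟩ := (hA.and hB).exists
  -- t2 with exp(-t2²/K) = 1/8
  set t2 : ℝ := Real.sqrt (K * Real.log 8) with ht2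
  have hlog8 : 0 < Real.log 8 := Real.log_pos (by norm_num)
  have ht2sq : t2 ^ 2 = K * Real.log 8 := Real.sq_sqrt (by positivity)
  have ht2pos : 0 < t2 := Real.sqrt_pos.2 (by positivity)
  have hE : ENNReal.ofReal (Real.exp (-(t2 ^ 2) / K)) = 8⁻¹ := by
    rw [ht2sq]
    have : -(K * Real.log 8) / K = -Real.log 8 := by
      rw [mul_comm]; field_simp
    rw [this, Real.exp_neg, Real.exp_log (by norm_num : (0:ℝ) < 8)]
    rw [ENNReal.ofReal_inv_of_pos (by norm_num)]
    norm_num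
  -- mean bound
  have hmean : ∀ n : ℕ, (a:ℝ) ≤ n → mN n ≤ a + t2 := by
    intro n hna
    set U : Set H := {x | (a:ℝ) < g x} ∪ {x | g x < -(a:ℝ)} ∪
      {x | mN n + t2 ≤ stmt17_clamp g n x} ∪ {x | stmt17_clamp g n x ≤ mN n - t2} with hU
    have hUlt : ν U < 1 := by
      have h1 := ha
      have h2 := hb
      have h3 := (up n t2 ht2pos).trans_eq hE
      have h4 := (down n t2 ht2pos).trans_eq hE
      calc ν U ≤ ν {x | (a:ℝ) < g x} + ν {x | g x < -(a:ℝ)} +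
          ν {x | mN n + t2 ≤ stmt17_clamp g n x} + ν {x | stmt17_clamp g n x ≤ mN n - t2} := by
            refine le_trans (measure_union_le _ _) ?_
            refine add_le_add_left (le_trans (measure_union_le _ _) ?_) _
            exact add_le_add_left (measure_union_le _ _) _
        _ ≤ 1/4 + 1/4 + 8⁻¹ + 8⁻¹ := by
            exact add_le_add (add_le_add (add_le_add h1.le h2.le) h3) h4
        _ < 1 := by
            have h4' : (1/4 : ℝ≥0∞) = ENNReal.ofReal (1/4) := by
              rw [ENNReal.ofReal_div_of_pos (by norm_num)]; norm_num
            have h8' : (8⁻¹ : ℝ≥0∞) = ENNReal.ofReal (8⁻¹) := by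
              rw [ENNReal.ofReal_inv_of_pos (by norm_num)]; norm_num
            rw [h4', h8', ← ENNReal.ofReal_add (by norm_num) (by norm_num),
              ← ENNReal.ofReal_add (by norm_num) (by norm_num),
              ← ENNReal.ofReal_add (by norm_num) (by norm_num)]
            calc ENNReal.ofReal (1/4+1/4+8⁻¹+8⁻¹) < ENNReal.ofReal 1 := by
                  rw [ENNReal.ofReal_lt_ofReal_iff (by norm_num)]; norm_num
              _ = 1 := ENNReal.ofReal_one
    have hUne : U ≠ Set.univ := by
      intro hcon
      rw [hcon, measure_univ] at hUlt
      exact lt_irrefl _ hUlt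
    obtain ⟨x, hx⟩ := (Set.ne_univ_iff_exists_notMem U).1 hUne
    simp only [hU, Set.mem_union, Set.mem_setOf_eq, not_or, not_le, not_lt] at hx
    obtain ⟨⟨⟨hx1, hx2⟩, hx3⟩, hx4⟩ := hx
    have hcx : stmt17_clamp g n x = g x := stmt17_clamp_eq (abs_le.2 ⟨by linarith, by linarith⟩)
    rw [hcx] at hx4
    linarith
  -- conclusion
  refine ⟨max ((a:ℝ) + t2) 0, le_max_right _ _, ?_⟩
  intro t ht
  obtain ⟨n, hn⟩ := exists_nat_ge (max (max ((a:ℝ) + t2) 0 + t) (a:ℝ))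
  have hna : (a:ℝ) ≤ n := le_trans (le_max_right _ _) hn
  have hnt : max ((a:ℝ) + t2) 0 + t ≤ n := le_trans (le_max_left _ _) hn
  refine le_trans (measure_mono ?_) (up n t ht)
  intro x hx
  simp only [Set.mem_setOf_eq] at hx ⊢
  have h1 : min (g x) (n:ℝ) ≤ stmt17_clamp g n x := stmt17_clamp_ge_min g n x
  have h2 : max ((a:ℝ) + t2) 0 + t ≤ min (g x) (n:ℝ) := le_min hx hnt
  have h3 : mN n ≤ (a:ℝ) + t2 := hmean n hna
  have h4 : (a:ℝ) + t2 ≤ max ((a:ℝ) + t2) 0 := le_max_left _ _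
  linarith

end Aux

lemma stmt17_tail {H : Type*} [MeasurableSpace H] [PseudoMetricSpace H] [BorelSpace H]
    (ν : Measure H) [IsProbabilityMeasure ν] (K : ℝ) (hK : 0 < K)
    (h : ∀ h : H → ℝ, (∃ M, ∀ x, |h x| ≤ M) → LipschitzWith 1 h →
      ∀ t > (0 : ℝ),
        ν {x | (∫ y, h y ∂ν) + t ≤ h x} ≤ ENNReal.ofReal (Real.exp (-(t ^ 2) / K)))
    (g : H → ℝ) (hg : LipschitzWith 1 g) (hint : Integrable g ν) :
    ∀ t > (0:ℝ), ν {x | (∫ y, g y ∂ν) + t ≤ g x} ≤ ENNReal.ofReal (Real.exp (-(t ^ 2) / K)) := by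
  set m := ∫ y, g y ∂ν with hm
  have hconv : Tendsto (fun n : ℕ => ∫ y, stmt17_clamp g n y ∂ν) atTop (𝓝 m) := by
    refine tendsto_integral_of_dominated_convergence (fun x => |g x|)
      (fun n => ((stmt17_clamp_lip hg n).continuous).aestronglyMeasurable)
      hint.abs (fun n => ae_of_all _ fun x => ?_) (ae_of_all _ fun x => stmt17_clamp_tendsto g x)
    simpa [Real.norm_eq_abs] using stmt17_clamp_abs_le g n x
  intro t ht
  have key : ∀ ε : ℝ, 0 < ε → ε < t →
      ν {x | m + t ≤ g x} ≤ ENNReal.ofReal (Real.exp (-((t-ε)^2)/K)) := by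
    intro ε hε hεt
    obtain ⟨N, hN⟩ := Metric.tendsto_atTop.mp hconv ε hε
    obtain ⟨n1, hn1⟩ := exists_nat_ge (m + t)
    set n := max N n1 with hn
    have hdist := hN n (le_max_left _ _)
    rw [Real.dist_eq] at hdist
    have hnc : m + t ≤ (n:ℝ) := hn1.trans (Nat.cast_le.2 (le_max_right _ _))
    have hup := h (stmt17_clamp g n) ⟨n, stmt17_clamp_bdd g n⟩ (stmt17_clamp_lip hg n)
      (t - ε) (by linarith)
    refine le_trans (measure_mono ?_) hup
    intro x hx
    simp only [Set.mem_setOf_eq] at hx ⊢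
    have h1 : min (g x) (n:ℝ) ≤ stmt17_clamp g n x := stmt17_clamp_ge_min g n x
    have h2 : m + t ≤ min (g x) (n:ℝ) := le_min hx hnc
    have h3 := abs_lt.1 hdist
    linarith
  have hcont : Tendsto (fun ε : ℝ => ENNReal.ofReal (Real.exp (-((t-ε)^2)/K))) (𝓝[>] (0:ℝ))
      (𝓝 (ENNReal.ofReal (Real.exp (-(t^2)/K)))) := by
    have hc : Continuous fun ε : ℝ => ENNReal.ofReal (Real.exp (-((t-ε)^2)/K)) := by
      refine ENNReal.continuous_ofReal.comp (Real.continuous_exp.comp ?_)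
      exact (((continuous_const.sub continuous_id).pow 2).neg).div_const K
    exact (hc.tendsto' 0 _ (by norm_num)).mono_left nhdsWithin_le_nhds
  refine ge_of_tendsto hcont ?_
  filter_upwards [Ioo_mem_nhdsGT_of_mem (show (0:ℝ) ∈ Ico 0 t from ⟨le_rfl, ht⟩)] with ε hε
  exact key ε hε.1 hε.2

/-- Extension of Gaussian tail bounds from bounded to unbounded Lipschitz functions:
if every bounded 1-Lipschitz `h` satisfies `ν({h ≥ m_ν(h) + t}) ≤ exp(−t²/K)` for every
`t > 0`, then every 1-Lipschitz `g` belongs to `L^p(H,ν)` for every `p ≥ 1` and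
satisfies the same tail bound. -/
theorem stmt17
    {H : Type*} [NormedAddCommGroup H] [InnerProductSpace ℝ H] [CompleteSpace H]
    [SecondCountableTopology H] [MeasurableSpace H] [BorelSpace H]
    (ν : Measure H) [IsProbabilityMeasure ν]
    (K : ℝ) (hK : 0 < K)
    (h : ∀ h : H → ℝ, (∃ M, ∀ x, |h x| ≤ M) → LipschitzWith 1 h →
      ∀ t > (0 : ℝ),
        ν {x | (∫ y, h y ∂ν) + t ≤ h x} ≤ ENNReal.ofReal (Real.exp (-(t ^ 2) / K))) :
    ∀ g : H → ℝ, LipschitzWith 1 g →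
      (∀ p : ℝ, 1 ≤ p → MemLp g (ENNReal.ofReal p) ν) ∧
      ∀ t > (0 : ℝ),
        ν {x | (∫ y, g y ∂ν) + t ≤ g x} ≤ ENNReal.ofReal (Real.exp (-(t ^ 2) / K)) := by
  intro g hg
  have hgm : Measurable g := hg.continuous.measurable
  obtain ⟨C1, hC1, htail1⟩ := stmt17_one_sided ν K hK h g hg
  obtain ⟨C2, hC2, htail2⟩ := stmt17_one_sided ν K hK h (fun x => -(g x)) hg.neg
  set C := max C1 C2 with hC
  have htail : ∀ t > (0:ℝ), ν {x | C + t ≤ |g x|} ≤ ENNReal.ofReal (2 * Real.exp (-(t^2)/K)) := by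
    intro t ht
    have hsub : {x | C + t ≤ |g x|} ⊆ {x | C1 + t ≤ g x} ∪ {x | C2 + t ≤ -(g x)} := by
      intro x hx
      simp only [Set.mem_setOf_eq, Set.mem_union] at hx ⊢
      rcases le_abs.1 hx with h1 | h1
      · left; have := le_max_left C1 C2; linarith
      · right; have := le_max_right C1 C2; linarith
    calc ν {x | C + t ≤ |g x|}
        ≤ ν {x | C1 + t ≤ g x} + ν {x | C2 + t ≤ -(g x)} :=
          le_trans (measure_mono hsub) (measure_union_le _ _)
      _ ≤ ENNReal.ofReal (Real.exp (-(t^2)/K)) + ENNReal.ofReal (Real.exp (-(t^2)/K)) :=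
          add_le_add (htail1 t ht) (htail2 t ht)
      _ = ENNReal.ofReal (2 * Real.exp (-(t^2)/K)) := by
          rw [← ENNReal.ofReal_add (Real.exp_pos _).le (Real.exp_pos _).le, two_mul]
  have hmem : ∀ p : ℝ, 1 ≤ p → MemLp g (ENNReal.ofReal p) ν :=
    fun p hp => stmt17_memLp ν K hK hgm C (le_trans hC1 (le_max_left _ _)) htail p hp
  refine ⟨hmem, ?_⟩
  have hint : Integrable g ν := memLp_one_iff_integrable.mp (by simpa using hmem 1 le_rfl)
  exact stmt17_tail ν K hK h g hg hint
end
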